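/- arXiv:1801.08243 — 3 statements merged into one kernel-verified Lean document; each statement's English description precedes it below -/
import Mathlib

section
/- For all finite simple graphs G and H, the strict vector chromatic number of their categorical product satisfies χ_sv(G × H) = min{χ_sv(G), χ_sv(H)}. -/
open Matrix Kronecker

noncomputable section VectorColoring

variable {V α β : Type*}

/-- A vector `t`-coloring of a graph `G`: vectors `p i` with `p i ⬝ᵥ p i = t - 1`
and `p i ⬝ᵥ p j ≤ -1` on edges. -/
def IsVecColoring [Fintype V] (G : SimpleGraph V) (t : ℝ) {d : ℕ}
    (p : V → Fin d → ℝ) : Prop :=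
  (∀ i, p i ⬝ᵥ p i = t - 1) ∧ ∀ i j, G.Adj i j → p i ⬝ᵥ p j ≤ -1

/-- The vector chromatic number: the least `t ≥ 1` admitting a vector `t`-coloring. -/
def vecChrom [Fintype V] (G : SimpleGraph V) : ℝ :=
  sInf {t : ℝ | 1 ≤ t ∧ ∃ (d : ℕ) (p : V → Fin d → ℝ), IsVecColoring G t p}

/-- A strict vector `t`-coloring: `p i ⬝ᵥ p j = -1` on edges. -/
def IsStrictVecColoring [Fintype V] (G : SimpleGraph V) (t : ℝ) {d : ℕ}
    (p : V → Fin d → ℝ) : Prop :=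
  (∀ i, p i ⬝ᵥ p i = t - 1) ∧ ∀ i j, G.Adj i j → p i ⬝ᵥ p j = -1

/-- The strict vector chromatic number. -/
def strictVecChrom [Fintype V] (G : SimpleGraph V) : ℝ :=
  sInf {t : ℝ | 1 ≤ t ∧ ∃ (d : ℕ) (p : V → Fin d → ℝ), IsStrictVecColoring G t p}

/-- The Gram matrix of a family of vectors. -/
def gramMat {d : ℕ} (p : V → Fin d → ℝ) : Matrix V V ℝ :=
  Matrix.of fun i j => p i ⬝ᵥ p j

/-- `M` is the Gram matrix of an optimal vector coloring of `G`. -/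
def IsOptGram [Fintype V] (G : SimpleGraph V) (M : Matrix V V ℝ) : Prop :=
  ∃ (d : ℕ) (p : V → Fin d → ℝ), IsVecColoring G (vecChrom G) p ∧ M = gramMat p

/-- `grk G = rk(G)`: the maximum rank of the Gram matrix of an optimal vector coloring. -/
def grk [Fintype V] (G : SimpleGraph V) : ℕ :=
  sSup {r : ℕ | ∃ M : Matrix V V ℝ, IsOptGram G M ∧ M.rank = r}

/-- The categorical (tensor) product of graphs. -/
def catProd (G : SimpleGraph α) (H : SimpleGraph β) : SimpleGraph (α × β) where
  Adj x y := G.Adj x.1 y.1 ∧ H.Adj x.2 y.2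
  symm := by constructor; intro x y hxy; exact ⟨hxy.1.symm, hxy.2.symm⟩
  loopless := by constructor; intro x hx; exact G.loopless.irrefl x.1 hx.1

/-- A feasible dual solution for `vecChrom G`. -/
def IsDualSol [Fintype V] (G : SimpleGraph V) (B : Matrix V V ℝ) : Prop :=
  B.PosSemidef ∧ (∀ i j, i ≠ j → ¬ G.Adj i j → B i j = 0) ∧
    (∀ i j, 0 ≤ B i j) ∧ B.trace = 1

/-- An optimal dual solution for `vecChrom G`: feasible with objective value `vecChrom G`. -/
def IsOptDual [Fintype V] (G : SimpleGraph V) (B : Matrix V V ℝ) : Prop :=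
  IsDualSol G B ∧ (∑ i, ∑ j, B i j) = vecChrom G

/-- The all-ones matrix `J`. -/
def allOnes (γ : Type*) : Matrix γ γ ℝ :=
  Matrix.of fun _ _ => 1

/-- The graph `G(B)` of a (symmetric) matrix `B`: distinct `i, j` adjacent iff `B i j ≠ 0`. -/
def matGraph (B : Matrix V V ℝ) : SimpleGraph V where
  Adj i j := i ≠ j ∧ B i j ≠ 0 ∧ B j i ≠ 0
  symm := by constructor; intro i j hij; exact ⟨hij.1.symm, hij.2.2, hij.2.1⟩
  loopless := by constructor; intro i hi; exact hi.1 rfl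

/-- The spanning subgraph `G^p` of edges tight in the vector coloring `p`. -/
def tightSub [Fintype V] (G : SimpleGraph V) {d : ℕ} (p : V → Fin d → ℝ) :
    SimpleGraph V where
  Adj i j := G.Adj i j ∧ p i ⬝ᵥ p j = -1
  symm := by
    constructor
    intro i j hij
    exact ⟨hij.1.symm, by rw [dotProduct_comm]; exact hij.2⟩
  loopless := by constructor; intro i hi; exact G.loopless.irrefl i hi.1

/-- The skeleton `G^sk`: the spanning subgraph of edges tight in every optimal
vector coloring. -/
def skeleton [Fintype V] (G : SimpleGraph V) : SimpleGraph V where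
  Adj i j := G.Adj i j ∧ ∀ (d : ℕ) (p : V → Fin d → ℝ),
      IsVecColoring G (vecChrom G) p → p i ⬝ᵥ p j = -1
  symm := by
    constructor
    intro i j hij
    refine ⟨hij.1.symm, fun d p hp => ?_⟩
    rw [dotProduct_comm]
    exact hij.2 d p hp
  loopless := by constructor; intro i hi; exact G.loopless.irrefl i hi.1

/-- `i` is neighborly in the vector coloring `p`: `-p i` lies in the conical hull of
the vectors of the `∼_p`-neighbours of `i`. -/
def NeighborlyIn [Fintype V] (G : SimpleGraph V) {d : ℕ} (p : V → Fin d → ℝ)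
    (i : V) : Prop :=
  ∃ c : V → ℝ, (∀ j, 0 ≤ c j) ∧ (∀ j, c j ≠ 0 → G.Adj i j ∧ p i ⬝ᵥ p j = -1) ∧
    -p i = ∑ j, c j • p j

/-- `i` is neighborly: neighborly in every optimal vector coloring. -/
def Neighborly [Fintype V] (G : SimpleGraph V) (i : V) : Prop :=
  ∀ (d : ℕ) (p : V → Fin d → ℝ), IsVecColoring G (vecChrom G) p → NeighborlyIn G p i

/-- `i →_p j`: `-p i = ∑ α_l • p l` over `∼_p`-neighbours `l` of `i`, with `α_j > 0`. -/
def ArrowIn [Fintype V] (G : SimpleGraph V) {d : ℕ} (p : V → Fin d → ℝ)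
    (i j : V) : Prop :=
  ∃ c : V → ℝ, (∀ l, 0 ≤ c l) ∧ (∀ l, c l ≠ 0 → G.Adj i l ∧ p i ⬝ᵥ p l = -1) ∧
    0 < c j ∧ -p i = ∑ l, c l • p l

/-- `μ` is an eigenvalue of `M`. -/
def IsEigenvalue [Fintype V] (M : Matrix V V ℝ) (μ : ℝ) : Prop :=
  ∃ v : V → ℝ, v ≠ 0 ∧ M *ᵥ v = μ • v

/-- `lam` is the largest eigenvalue of `M`. -/
def IsMaxEigenvalue [Fintype V] (M : Matrix V V ℝ) (lam : ℝ) : Prop :=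
  IsGreatest {μ : ℝ | IsEigenvalue M μ} lam

/-- `lam` is the smallest eigenvalue of `M`. -/
def IsMinEigenvalue [Fintype V] (M : Matrix V V ℝ) (lam : ℝ) : Prop :=
  IsLeast {μ : ℝ | IsEigenvalue M μ} lam

/-- The eigenspace of `M` for `μ`. -/
def eigSpace [Fintype V] (M : Matrix V V ℝ) (μ : ℝ) : Submodule ℝ (V → ℝ) :=
  LinearMap.ker (M.mulVecLin - μ • (LinearMap.id : (V → ℝ) →ₗ[ℝ] V → ℝ))

/-- `W` is (the Gram matrix of) a convex combination of vector colorings of `G × H`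
induced by `G` and by `H`: `W = a • (M ⊗ J) + b • (J ⊗ N)`. -/
def IsConvexCombInduced [Fintype α] [Fintype β] (G : SimpleGraph α) (H : SimpleGraph β)
    (W : Matrix (α × β) (α × β) ℝ) : Prop :=
  ∃ (a b : ℝ) (M : Matrix α α ℝ) (N : Matrix β β ℝ),
    0 ≤ a ∧ 0 ≤ b ∧ a + b = 1 ∧ IsOptGram G M ∧ IsOptGram H N ∧
    W = a • (M ⊗ₖ allOnes β) + b • (allOnes α ⊗ₖ N)

end VectorColoring
namespace SVCAux

open Finset Matrix

variable {V : Type*} [Fintype V]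

/-- The feasible set for the strict vector chromatic number. -/
def fs (G : SimpleGraph V) : Set ℝ :=
  {t : ℝ | 1 ≤ t ∧ ∃ (d : ℕ) (p : V → Fin d → ℝ), IsStrictVecColoring G t p}

lemma strictVecChrom_eq_sInf_fs (G : SimpleGraph V) : strictVecChrom G = sInf (fs G) := rfl

lemma fs_subset_Ici (G : SimpleGraph V) : fs G ⊆ Set.Ici 1 := fun _ ht => ht.1

lemma fs_bddBelow (G : SimpleGraph V) : BddBelow (fs G) :=
  ⟨1, fun _ ht => ht.1⟩

/-- Transport a coloring indexed by an arbitrary fintype into the feasible set. -/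
lemma mem_fs_of_fun {G : SimpleGraph V} {t : ℝ} (ht : 1 ≤ t) {ι : Type*} [Fintype ι]
    (p : V → ι → ℝ)
    (hd : ∀ i, ∑ m, p i m * p i m = t - 1)
    (he : ∀ i j, G.Adj i j → ∑ m, p i m * p j m = -1) : t ∈ fs G := by
  classical
  let e := Fintype.equivFin ι
  refine ⟨ht, Fintype.card ι, fun i m => p i (e.symm m), ?_, ?_⟩
  · intro i
    have : (∑ m : Fin (Fintype.card ι), p i (e.symm m) * p i (e.symm m))
        = ∑ m : ι, p i m * p i m := Fintype.sum_equiv e.symm _ _ (fun m => rfl)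
    simpa [dotProduct, this] using hd i
  · intro i j hij
    have : (∑ m : Fin (Fintype.card ι), p i (e.symm m) * p j (e.symm m))
        = ∑ m : ι, p i m * p j m := Fintype.sum_equiv e.symm _ _ (fun m => rfl)
    simpa [dotProduct, this] using he i j hij

lemma exists_coloring_fun {G : SimpleGraph V} {t : ℝ} (h : t ∈ fs G) :
    ∃ (ι : Type) (_ : Fintype ι) (p : V → ι → ℝ),
      (∀ i, ∑ m, p i m * p i m = t - 1) ∧
      (∀ i j, G.Adj i j → ∑ m, p i m * p j m = -1) := by
  obtain ⟨-, d, p, hd, he⟩ := h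
  exact ⟨Fin d, inferInstance, p, fun i => by simpa [dotProduct] using hd i,
    fun i j hij => by simpa [dotProduct] using he i j hij⟩

lemma fs_nonempty (G : SimpleGraph V) : (fs G).Nonempty := by
  classical
  rcases isEmpty_or_nonempty V with hV | hV
  · exact ⟨1, le_refl 1, 0, fun i => isEmptyElim i, fun i => isEmptyElim i,
      fun i => isEmptyElim i⟩
  · set n := Fintype.card V with hn
    have hn1 : 1 ≤ n := Fintype.card_pos
    set nr : ℝ := (n : ℝ) with hnr
    have hnr1 : 1 ≤ nr := by rw [hnr]; exact_mod_cast hn1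
    have hnrpos : 0 < nr := lt_of_lt_of_le zero_lt_one hnr1
    refine Set.nonempty_of_mem (mem_fs_of_fun hnr1 (ι := V)
      (fun i m => (if i = m then nr - 1 else -1) / Real.sqrt nr) ?_ ?_)
    · intro i
      have hsq : Real.sqrt nr * Real.sqrt nr = nr := Real.mul_self_sqrt hnrpos.le
      have : ∀ m : V, (if i = m then nr - 1 else -1) / Real.sqrt nr *
          ((if i = m then nr - 1 else -1) / Real.sqrt nr)
          = (if i = m then (nr-1)^2 - 1 else 0) / nr + 1 / nr := by
        intro m
        by_cases h : i = m <;> simp [h, div_mul_div_comm, hsq] <;> ring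
      rw [Finset.sum_congr rfl (fun m _ => this m), Finset.sum_add_distrib,
        ← Finset.sum_div, Finset.sum_ite_eq, if_pos (Finset.mem_univ i)]
      simp only [Finset.sum_const, Finset.card_univ, nsmul_eq_mul, ← hn]
      field_simp
      ring
    · intro i j hij
      have hne : i ≠ j := G.ne_of_adj hij
      have hsq : Real.sqrt nr * Real.sqrt nr = nr := Real.mul_self_sqrt hnrpos.le
      have : ∀ m : V, (if i = m then nr - 1 else -1) / Real.sqrt nr *
          ((if j = m then nr - 1 else -1) / Real.sqrt nr)
          = ((if i = m then -(nr-1) - 1 else 0) + (if j = m then -(nr-1) - 1 else 0)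
              + 1) / nr := by
        intro m
        by_cases h1 : i = m <;> by_cases h2 : j = m
        · exact absurd (h1.trans h2.symm) hne
        · simp [h1, h2, div_mul_div_comm, hsq]; try ring
        · simp [h1, h2, div_mul_div_comm, hsq]; try ring
        · simp [h1, h2, div_mul_div_comm, hsq]; try ring
      rw [Finset.sum_congr rfl (fun m _ => this m)]
      rw [← Finset.sum_div]
      rw [Finset.sum_add_distrib, Finset.sum_add_distrib, Finset.sum_ite_eq,
        Finset.sum_ite_eq, if_pos (Finset.mem_univ i), if_pos (Finset.mem_univ j)]
      simp only [Finset.sum_const, Finset.card_univ, nsmul_eq_mul, ← hn]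
      field_simp
      rw [hnr]; ring

lemma fs_upward {G : SimpleGraph V} {t t' : ℝ} (h : t ∈ fs G) (htt' : t ≤ t') :
    t' ∈ fs G := by
  classical
  obtain ⟨ι, _, p, hd, he⟩ := exists_coloring_fun h
  have ht1 : 1 ≤ t := h.1
  have hdiff : (0:ℝ) ≤ t' - t := sub_nonneg.mpr htt'
  refine mem_fs_of_fun (le_trans ht1 htt') (ι := ι ⊕ V)
    (fun i => Sum.elim (p i) (fun v => if v = i then Real.sqrt (t' - t) else 0)) ?_ ?_
  · intro i
    rw [Fintype.sum_sum_type]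
    simp only [Sum.elim_inl, Sum.elim_inr]
    have h2 : (∑ v : V, (if v = i then Real.sqrt (t' - t) else 0) *
        (if v = i then Real.sqrt (t' - t) else 0)) = t' - t := by
      rw [Finset.sum_eq_single i]
      · simp [Real.mul_self_sqrt hdiff]
      · intro b _ hb; simp [hb]
      · intro h; exact absurd (Finset.mem_univ i) h
    rw [hd i, h2]; ring
  · intro i j hij
    have hne : i ≠ j := G.ne_of_adj hij
    rw [Fintype.sum_sum_type]
    simp only [Sum.elim_inl, Sum.elim_inr]
    have h2 : (∑ v : V, (if v = i then Real.sqrt (t' - t) else 0) *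
        (if v = j then Real.sqrt (t' - t) else 0)) = 0 := by
      apply Finset.sum_eq_zero
      intro v _
      by_cases h1 : v = i
      · subst h1; rw [if_neg hne]; ring
      · simp [h1]
    rw [he i j hij, h2]; ring

end SVCAux
namespace SVCAux

open Finset

variable {α β : Type*} [Fintype α] [Fintype β]

lemma fs_left_subset (G : SimpleGraph α) (H : SimpleGraph β) :
    fs G ⊆ fs (catProd G H) := by
  rintro t ⟨ht, d, p, hd, he⟩
  exact ⟨ht, d, fun x => p x.1, fun x => hd x.1, fun x y hxy => he x.1 y.1 hxy.1⟩

lemma fs_right_subset (G : SimpleGraph α) (H : SimpleGraph β) :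
    fs H ⊆ fs (catProd G H) := by
  rintro t ⟨ht, d, p, hd, he⟩
  exact ⟨ht, d, fun x => p x.2, fun x => hd x.2, fun x y hxy => he x.2 y.2 hxy.2⟩

section QuadForm

variable {V : Type*} [Fintype V]

/-- The quadratic form of a square array. -/
def qf (A : V → V → ℝ) (x : V → ℝ) : ℝ := ∑ i, ∑ j, x i * A i j * x j

lemma qf_smul (A : V → V → ℝ) (c : ℝ) (x : V → ℝ) : qf A (c • x) = c ^ 2 * qf A x := by
  unfold qf
  rw [Finset.mul_sum]
  refine Finset.sum_congr rfl fun i _ => ?_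
  rw [Finset.mul_sum]
  refine Finset.sum_congr rfl fun j _ => ?_
  simp only [Pi.smul_apply, smul_eq_mul]; ring

lemma qf_sub (A A' : V → V → ℝ) (x : V → ℝ) : qf A' x = qf A x + qf (A' - A) x := by
  unfold qf
  rw [← Finset.sum_add_distrib]
  refine Finset.sum_congr rfl fun i _ => ?_
  rw [← Finset.sum_add_distrib]
  refine Finset.sum_congr rfl fun j _ => ?_
  simp only [Pi.sub_apply]; ring

lemma qf_abs_le (Δ : V → V → ℝ) (x : V → ℝ) {d : ℝ} (hd : ∀ i j, |Δ i j| ≤ d) :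
    |qf Δ x| ≤ d * (∑ i, |x i|) ^ 2 := by
  have h1 : |qf Δ x| ≤ ∑ i, ∑ j, |x i| * |Δ i j| * |x j| := by
    refine (Finset.abs_sum_le_sum_abs _ _).trans ?_
    refine Finset.sum_le_sum fun i _ => ?_
    refine (Finset.abs_sum_le_sum_abs _ _).trans ?_
    refine Finset.sum_le_sum fun j _ => le_of_eq ?_
    rw [abs_mul, abs_mul]
  refine h1.trans ?_
  have h2 : ∀ i j : V, |x i| * |Δ i j| * |x j| ≤ d * (|x i| * |x j|) := by
    intro i j
    have heq : |x i| * |Δ i j| * |x j| = |Δ i j| * (|x i| * |x j|) := by ring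
    rw [heq]
    exact mul_le_mul_of_nonneg_right (hd i j) (by positivity)
  calc ∑ i, ∑ j, |x i| * |Δ i j| * |x j| ≤ ∑ i, ∑ j, d * (|x i| * |x j|) :=
        Finset.sum_le_sum fun i _ => Finset.sum_le_sum fun j _ => h2 i j
    _ = d * (∑ i, |x i|) ^ 2 := by
        rw [sq, Finset.sum_mul_sum, Finset.mul_sum]
        refine Finset.sum_congr rfl fun i _ => ?_
        rw [Finset.mul_sum]

/-- The set of (not necessarily symmetric) arrays with positive definite quadratic form. -/
def pdSet (V : Type*) [Fintype V] : Set (V → V → ℝ) :=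
  {A | ∀ x : V → ℝ, x ≠ 0 → 0 < qf A x}

lemma convex_pdSet : Convex ℝ (pdSet V) := by
  intro A hA B hB a b ha hb hab
  intro x hx
  have hqa := hA x hx
  have hqb := hB x hx
  have hlin : qf (a • A + b • B) x = a * qf A x + b * qf B x := by
    unfold qf
    rw [Finset.mul_sum, Finset.mul_sum, ← Finset.sum_add_distrib]
    refine Finset.sum_congr rfl fun i _ => ?_
    rw [Finset.mul_sum, Finset.mul_sum, ← Finset.sum_add_distrib]
    refine Finset.sum_congr rfl fun j _ => ?_
    simp only [Pi.add_apply, Pi.smul_apply, smul_eq_mul]; ring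
  rw [hlin]
  rcases ha.eq_or_lt with h | h
  · have hb1 : b = 1 := by linarith
    rw [← h, hb1]; simpa using hqb
  · have h1 : 0 < a * qf A x := mul_pos h hqa
    have h2 : 0 ≤ b * qf B x := mul_nonneg hb hqb.le
    linarith

lemma pdSet_nonempty : (pdSet V).Nonempty := by
  classical
  refine ⟨fun i j => if i = j then (1:ℝ) else 0, ?_⟩
  intro x hx
  have h1 : qf (fun i j : V => if i = j then (1:ℝ) else 0) x = ∑ i, x i ^ 2 := by
    unfold qf
    refine Finset.sum_congr rfl fun i _ => ?_
    rw [Finset.sum_eq_single i]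
    · simp [sq]
    · intro b _ hb; simp [Ne.symm hb]
    · intro h; exact absurd (Finset.mem_univ i) h
  rw [h1]
  rcases Function.ne_iff.mp hx with ⟨i, hi⟩
  have hi' : x i ≠ 0 := by simpa using hi
  have : (0:ℝ) < x i ^ 2 := by positivity
  refine lt_of_lt_of_le this ?_
  exact Finset.single_le_sum (fun j _ => sq_nonneg (x j)) (Finset.mem_univ i)

lemma isOpen_pdSet : IsOpen (pdSet V) := by
  classical
  rcases isEmpty_or_nonempty V with hV | hV
  · have : pdSet V = Set.univ := by
      ext A
      simp only [pdSet, Set.mem_setOf_eq, Set.mem_univ, iff_true]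
      intro x hx
      exact absurd (funext fun i => isEmptyElim i) hx
    rw [this]; exact isOpen_univ
  · rw [Metric.isOpen_iff]
    intro A hA
    set n : ℝ := (Fintype.card V : ℝ) with hn
    have hnpos : 0 < n := by
      rw [hn]; exact_mod_cast Fintype.card_pos
    set K : Set (V → ℝ) := {x | ∑ i, x i ^ 2 = 1} with hK
    have hKne : K.Nonempty := by
      obtain ⟨i⟩ := hV
      refine ⟨fun j => if j = i then 1 else 0, ?_⟩
      simp only [hK, Set.mem_setOf_eq]
      rw [Finset.sum_eq_single i]
      · simp
      · intro b _ hb; simp [hb]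
      · intro h; exact absurd (Finset.mem_univ i) h
    have hKclosed : IsClosed K := by
      have : Continuous fun x : V → ℝ => ∑ i, x i ^ 2 :=
        continuous_finset_sum _ fun i _ => (continuous_apply i).pow 2
      exact isClosed_eq this continuous_const
    have hKcomp : IsCompact K := by
      haveI : ProperSpace (V → ℝ) := inferInstance
      refine (isCompact_closedBall (0 : V → ℝ) 1).of_isClosed_subset hKclosed ?_
      intro x hx
      rw [Metric.mem_closedBall, dist_pi_le_iff zero_le_one]
      intro i
      have h1 : x i ^ 2 ≤ 1 := by
        rw [← hx]
        exact Finset.single_le_sum (fun j _ => sq_nonneg (x j)) (Finset.mem_univ i)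
      rw [Real.dist_eq, Pi.zero_apply, sub_zero]
      exact abs_le_one_iff_mul_self_le_one.mpr (by nlinarith)
    have hcont : Continuous fun x : V → ℝ => qf A x := by
      unfold qf
      refine continuous_finset_sum _ fun i _ => continuous_finset_sum _ fun j _ => ?_
      exact ((continuous_apply i).mul continuous_const).mul (continuous_apply j)
    obtain ⟨x₀, hx₀K, hx₀min⟩ := hKcomp.exists_isMinOn hKne hcont.continuousOn
    set m : ℝ := qf A x₀ with hm
    have hx₀ne : x₀ ≠ 0 := by
      intro h
      have := hx₀K
      simp only [hK, Set.mem_setOf_eq, h, Pi.zero_apply] at this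
      simp at this
    have hmpos : 0 < m := hA x₀ hx₀ne
    refine ⟨m / (n + 1), by positivity, ?_⟩
    intro A' hA'
    intro x hx
    -- entrywise bound on A' - A
    have hdist : ∀ i j, |(A' - A) i j| ≤ m / (n + 1) := by
      intro i j
      have h1 : dist A' A ≤ m / (n+1) := le_of_lt (by simpa [Metric.mem_ball] using hA')
      have h2 : dist (A' i) (A i) ≤ m / (n+1) :=
        (dist_pi_le_iff (by positivity)).mp h1 i
      have h3 : dist (A' i j) (A i j) ≤ m / (n+1) :=
        (dist_pi_le_iff (by positivity)).mp h2 j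
      simpa [Real.dist_eq] using h3
    -- claim positive on K
    have hKpos : ∀ y ∈ K, 0 < qf A' y := by
      intro y hy
      have h1 : qf A' y = qf A y + qf (A' - A) y := qf_sub A A' y
      have h2 : |qf (A' - A) y| ≤ m / (n+1) * (∑ i, |y i|) ^ 2 :=
        qf_abs_le _ _ hdist
      have h3 : (∑ i, |y i|) ^ 2 ≤ n * ∑ i, |y i| ^ 2 := by
        have := sq_sum_le_card_mul_sum_sq (s := Finset.univ) (f := fun i => |y i|)
        simpa [hn, Finset.card_univ] using this
      have h4 : (∑ i : V, |y i| ^ 2) = 1 := by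
        have : ∀ i : V, |y i| ^ 2 = y i ^ 2 := fun i => sq_abs (y i)
        rw [Finset.sum_congr rfl fun i _ => this i]
        exact hy
      have h5 : (∑ i, |y i|) ^ 2 ≤ n := by rw [h4] at h3; simpa using h3
      have h6 : |qf (A' - A) y| ≤ m / (n+1) * n := by
        refine h2.trans ?_
        exact mul_le_mul_of_nonneg_left h5 (by positivity)
      have h7 : m ≤ qf A y := hx₀min hy
      have h8 : m / (n+1) * n < m := by
        rw [div_mul_eq_mul_div, div_lt_iff₀ (by positivity)]
        nlinarith
      have := abs_le.mp h6
      linarith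
    -- scale
    have hs : (0:ℝ) < ∑ i, x i ^ 2 := by
      rcases Function.ne_iff.mp hx with ⟨i, hi⟩
      have hi' : x i ≠ 0 := by simpa using hi
      have h0 : (0:ℝ) < x i ^ 2 := by positivity
      refine lt_of_lt_of_le h0 ?_
      exact Finset.single_le_sum (fun j _ => sq_nonneg (x j)) (Finset.mem_univ i)
    set r : ℝ := Real.sqrt (∑ i, x i ^ 2) with hr
    have hrpos : 0 < r := Real.sqrt_pos.mpr hs
    have hy : (r⁻¹ • x) ∈ K := by
      simp only [hK, Set.mem_setOf_eq]
      have : ∀ i : V, (r⁻¹ • x) i ^ 2 = r⁻¹ ^ 2 * x i ^ 2 := by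
        intro i; simp [Pi.smul_apply, smul_eq_mul]; ring
      rw [Finset.sum_congr rfl fun i _ => this i, ← Finset.mul_sum]
      rw [hr]
      rw [inv_pow, Real.sq_sqrt hs.le]
      exact inv_mul_cancel₀ hs.ne'
    have hq := hKpos _ hy
    have : qf A' (r⁻¹ • x) = r⁻¹ ^ 2 * qf A' x := qf_smul _ _ _
    rw [this] at hq
    have hrinv : (0:ℝ) < r⁻¹ ^ 2 := by positivity
    nlinarith

end QuadForm

end SVCAux
namespace SVCAux

open Finset

section Dual

variable {V : Type*} [Fintype V]

lemma qf_xxT (x y : V → ℝ) : qf (fun i j => x i * x j) y = (∑ i, x i * y i) ^ 2 := by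
  unfold qf
  rw [sq, Finset.sum_mul_sum]
  exact Finset.sum_congr rfl fun i _ => Finset.sum_congr rfl fun j _ => by ring

lemma qf_smulA (A : V → V → ℝ) (c : ℝ) (x : V → ℝ) : qf (c • A) x = c * qf A x := by
  unfold qf
  rw [Finset.mul_sum]
  refine Finset.sum_congr rfl fun i _ => ?_
  rw [Finset.mul_sum]
  refine Finset.sum_congr rfl fun j _ => ?_
  simp only [Pi.smul_apply, smul_eq_mul]; ring

lemma qf_addA (A B : V → V → ℝ) (x : V → ℝ) : qf (A + B) x = qf A x + qf B x := by
  unfold qf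
  rw [← Finset.sum_add_distrib]
  refine Finset.sum_congr rfl fun i _ => ?_
  rw [← Finset.sum_add_distrib]
  refine Finset.sum_congr rfl fun j _ => ?_
  simp only [Pi.add_apply]; ring

/-- The value of a quadratic form on a vector supported on two coordinates. -/
lemma qf_two [DecidableEq V] (A : V → V → ℝ) {i j : V} (hij : i ≠ j) (s : ℝ) :
    qf A (fun a => if a = i then 1 else if a = j then s else 0)
      = A i i + s * (A i j + A j i) + s ^ 2 * A j j := by
  set x : V → ℝ := fun a => if a = i then 1 else if a = j then s else 0 with hx
  have hsum : ∀ g : V → ℝ, (∑ b, g b * x b) = g i + s * g j := by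
    intro g
    have hpt : ∀ b, g b * x b =
        (if b = i then g b else 0) + (if b = j then s * g b else 0) := by
      intro b
      by_cases h1 : b = i
      · subst h1; rw [if_neg hij]; simp [hx]
      · by_cases h2 : b = j
        · subst h2; simp [hx, h1]; ring
        · simp [hx, h1, h2]
    rw [Finset.sum_congr rfl fun b _ => hpt b, Finset.sum_add_distrib]
    rw [Finset.sum_ite_eq', Finset.sum_ite_eq', if_pos (Finset.mem_univ i),
      if_pos (Finset.mem_univ j)]
  unfold qf
  have hout : ∀ a, (∑ b, x a * A a b * x b) = x a * (A a i + s * A a j) := by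
    intro a
    rw [show (∑ b, x a * A a b * x b) = ∑ b, (x a * A a b) * x b from
      Finset.sum_congr rfl fun b _ => by ring]
    rw [hsum (fun b => x a * A a b)]
    ring
  rw [Finset.sum_congr rfl fun a _ => hout a]
  rw [show (∑ a, x a * (A a i + s * A a j)) = ∑ a, (A a i + s * A a j) * x a from
    Finset.sum_congr rfl fun a _ => by ring]
  rw [hsum (fun a => A a i + s * A a j)]
  ring

lemma exists_symm_pd :
    ∃ A₀ ∈ pdSet V, ∀ i j : V, A₀ i j = A₀ j i := by
  classical
  refine ⟨fun i j => if i = j then (1:ℝ) else 0, ?_, ?_⟩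
  · intro x hx
    have h1 : qf (fun i j : V => if i = j then (1:ℝ) else 0) x = ∑ i, x i ^ 2 := by
      unfold qf
      refine Finset.sum_congr rfl fun i _ => ?_
      rw [Finset.sum_eq_single i]
      · simp [sq]
      · intro b _ hb; simp [Ne.symm hb]
      · intro h; exact absurd (Finset.mem_univ i) h
    rw [h1]
    rcases Function.ne_iff.mp hx with ⟨i, hi⟩
    have hi' : x i ≠ 0 := by simpa using hi
    have h0 : (0:ℝ) < x i ^ 2 := by positivity
    refine lt_of_lt_of_le h0 ?_
    exact Finset.single_le_sum (fun j _ => sq_nonneg (x j)) (Finset.mem_univ i)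
  · intro i j
    by_cases h : i = j <;> simp [h, eq_comm]

/-- A small limiting helper. -/
lemma le_zero_of_forall_le_eps_mul {y z : ℝ} (h : ∀ ε : ℝ, 0 < ε → y ≤ ε * z) : y ≤ 0 := by
  by_contra hy
  push_neg at hy
  rcases le_or_gt z 0 with hz | hz
  · have := h 1 one_pos; nlinarith
  · have h2 := h (y / (2 * z)) (by positivity)
    have h3 : y / (2 * z) * z = y / 2 := by field_simp
    rw [h3] at h2; linarith

end Dual

end SVCAux
namespace SVCAux

open Finset

variable {V : Type*} [Fintype V]

open scoped MatrixOrder in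
lemma psd_eq_transpose_mul_self {V : Type*} [Fintype V] {M : Matrix V V ℝ}
    (hM : M.PosSemidef) : ∃ B : Matrix V V ℝ, M = Bᴴ * B := by
  classical
  have h0 : 0 ≤ M := hM.nonneg
  have hs : (CFC.sqrt M)ᴴ = CFC.sqrt M := (CFC.sqrt_nonneg M).isSelfAdjoint
  exact ⟨CFC.sqrt M, by rw [hs, CFC.sqrt_mul_sqrt_self M h0]⟩

/-- Existence of a near-optimal dual SDP solution for the strict vector chromatic
number, given in Gram-decomposed form. -/
lemma exists_dual_rep (G : SimpleGraph V) {t' : ℝ} (h1 : 1 ≤ t')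
    (h : t' < strictVecChrom G) :
    ∃ b : V → V → ℝ,
      (∀ i j, i ≠ j → ¬ G.Adj i j → ∑ a, b i a * b j a = 0) ∧
      (∑ i, ∑ a, b i a * b i a = 1) ∧
      t' ≤ ∑ i, ∑ j, ∑ a, b i a * b j a := by
  classical
  set T : Set (V → V → ℝ) :=
    {A | (∀ i, A i i = t' - 1) ∧ ∀ i j, G.Adj i j → A i j = -1} with hTdef
  have hTconv : Convex ℝ T := by
    intro A hA B hB a b ha hb hab
    constructor
    · intro i
      simp only [Pi.add_apply, Pi.smul_apply, smul_eq_mul, hA.1 i, hB.1 i]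
      linear_combination (t' - 1) * hab
    · intro i j hij
      simp only [Pi.add_apply, Pi.smul_apply, smul_eq_mul, hA.2 i j hij, hB.2 i j hij]
      linear_combination (-1 : ℝ) * hab
  set M₀ : V → V → ℝ :=
    fun i j => if i = j then t' - 1 else if G.Adj i j then -1 else 0 with hM₀def
  have hM₀T : M₀ ∈ T := by
    constructor
    · intro i; simp [hM₀def]
    · intro i j hij; simp [hM₀def, hij, G.ne_of_adj hij]
  have hM₀symm : ∀ i j, M₀ i j = M₀ j i := by
    intro i j
    by_cases h' : i = j
    · simp [hM₀def, h']
    · by_cases h2 : G.Adj i j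
      · simp [hM₀def, h', Ne.symm h', h2, h2.symm]
      · have h2' : ¬ G.Adj j i := fun hc => h2 hc.symm
        simp [hM₀def, h', Ne.symm h', h2, h2']
  -- disjointness of the PD cone and the affine slice
  have hdisj : Disjoint (pdSet V) T := by
    rw [Set.disjoint_left]
    rintro A hApd ⟨hAdiag, hAedge⟩
    set M : Matrix V V ℝ := Matrix.of (fun i j => (A i j + A j i) / 2) with hMdef
    have hMqf : ∀ x : V → ℝ, qf (fun i j => M i j) x = qf A x := by
      intro x
      have hswap : ∑ i, ∑ j, x i * A j i * x j = ∑ i, ∑ j, x i * A i j * x j := by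
        rw [Finset.sum_comm]
        exact Finset.sum_congr rfl fun i _ => Finset.sum_congr rfl fun j _ => by ring
      unfold qf
      have hpt : ∀ i j, x i * M i j * x j
          = (x i * A i j * x j) / 2 + (x i * A j i * x j) / 2 := by
        intro i j
        simp only [hMdef, Matrix.of_apply]
        ring
      rw [Finset.sum_congr rfl fun i _ => Finset.sum_congr rfl fun j _ => hpt i j]
      simp only [Finset.sum_add_distrib, ← Finset.sum_div]
      rw [hswap]
      ring
    have hMpsd : M.PosSemidef := by
      refine Matrix.PosSemidef.of_dotProduct_mulVec_nonneg ?_ ?_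
      · ext i j
        simp only [Matrix.conjTranspose_apply, hMdef, Matrix.of_apply, star_trivial]
        ring
      · intro x
        have hx : star x ⬝ᵥ (M *ᵥ x) = qf (fun i j => M i j) x := by
          simp [dotProduct, Matrix.mulVec, qf, Finset.mul_sum, mul_assoc]
        rw [hx, hMqf]
        rcases eq_or_ne x 0 with rfl | hxne
        · simp [qf]
        · exact (hApd x hxne).le
    obtain ⟨N, hN⟩ := psd_eq_transpose_mul_self hMpsd
    have hentry : ∀ i j, (∑ a, N a i * N a j) = M i j := by
      intro i j
      rw [hN]
      simp [Matrix.mul_apply, Matrix.conjTranspose_apply]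
    have hmem : t' ∈ fs G := by
      refine mem_fs_of_fun h1 (ι := V) (fun i a => N a i) ?_ ?_
      · intro i
        rw [hentry i i]
        simp only [hMdef, Matrix.of_apply, hAdiag i]
        ring
      · intro i j hij
        rw [hentry i j]
        simp only [hMdef, Matrix.of_apply, hAedge i j hij, hAedge j i hij.symm]
        norm_num
    exact absurd h (not_lt.mpr (csInf_le (fs_bddBelow G) hmem))
  -- separation
  obtain ⟨f, u, hfs, hfT⟩ :=
    geometric_hahn_banach_open convex_pdSet isOpen_pdSet hTconv hdisj
  set sing : V → V → (V → V → ℝ) :=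
    fun i j => fun a b => if a = i ∧ b = j then 1 else 0 with hsing
  set Φ : V → V → ℝ := fun i j => -(f (sing i j)) with hΦdef
  have hbasis : ∀ A : V → V → ℝ, A = ∑ i, ∑ j, A i j • sing i j := by
    intro A
    funext a b
    simp only [Finset.sum_apply, Pi.smul_apply, smul_eq_mul, hsing]
    rw [Finset.sum_eq_single a]
    · rw [Finset.sum_eq_single b]
      · simp
      · intro c _ hc
        have : ¬(a = a ∧ b = c) := fun hh => hc hh.2.symm
        rw [if_neg this, mul_zero]
      · intro hb; exact absurd (Finset.mem_univ b) hb
    · intro c _ hc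
      apply Finset.sum_eq_zero
      intro j _
      have : ¬(a = c ∧ b = j) := fun hh => hc hh.1.symm
      rw [if_neg this, mul_zero]
    · intro ha; exact absurd (Finset.mem_univ a) ha
  have hfrep : ∀ A : V → V → ℝ, f A = -(∑ i, ∑ j, A i j * Φ i j) := by
    intro A
    conv_lhs => rw [hbasis A]
    rw [map_sum]
    rw [Finset.sum_congr rfl fun i _ => map_sum f _ _]
    simp only [_root_.map_smul, smul_eq_mul, hΦdef, mul_neg, Finset.sum_neg_distrib, neg_neg]
  have hcone : ∀ A ∈ pdSet V, ∀ c : ℝ, 0 < c → c • A ∈ pdSet V := by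
    intro A hA c hc x hx
    rw [qf_smulA]
    exact mul_pos hc (hA x hx)
  have hfle : ∀ A ∈ pdSet V, f A ≤ 0 := by
    intro A hA
    by_contra hpos
    push_neg at hpos
    set c : ℝ := (|u| + 1) / f A with hc
    have hcpos : 0 < c := by positivity
    have h2 := hfs _ (hcone A hA c hcpos)
    rw [_root_.map_smul, smul_eq_mul] at h2
    have h3 : c * f A = |u| + 1 := by rw [hc, div_mul_cancel₀ _ hpos.ne']
    rw [h3] at h2
    have := le_abs_self u
    linarith
  obtain ⟨A₀, hA₀pd, hA₀symm⟩ := exists_symm_pd (V := V)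
  have hu0 : 0 ≤ u := by
    by_contra hu
    push_neg at hu
    have hfA₀ : f A₀ ≤ 0 := hfle A₀ hA₀pd
    rcases eq_or_lt_of_le hfA₀ with heq | hlt
    · have := hfs A₀ hA₀pd; rw [heq] at this; linarith
    · set ε : ℝ := u / (2 * f A₀) with hε
      have hεpos : 0 < ε := div_pos_of_neg_of_neg hu (by linarith)
      have h2 := hfs _ (hcone A₀ hA₀pd ε hεpos)
      rw [_root_.map_smul, smul_eq_mul] at h2
      have hne : f A₀ ≠ 0 := ne_of_lt hlt
      have h3 : ε * f A₀ = u / 2 := by rw [hε]; field_simp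
      rw [h3] at h2; linarith
  have hdir : ∀ W : V → V → ℝ, (∀ i, W i i = 0) →
      (∀ i j, G.Adj i j → W i j = 0) → f W = 0 := by
    intro W hW1 hW2
    have hmemT : ∀ s : ℝ, M₀ + s • W ∈ T := by
      intro s
      constructor
      · intro i
        simp only [Pi.add_apply, Pi.smul_apply, smul_eq_mul, hW1 i, mul_zero, add_zero]
        simp [hM₀def]
      · intro i j hij
        simp only [Pi.add_apply, Pi.smul_apply, smul_eq_mul, hW2 i j hij, mul_zero,
          add_zero]
        simp [hM₀def, hij, G.ne_of_adj hij]
    by_contra hW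
    set s₀ : ℝ := (u - f M₀ - 1) / f W with hs₀
    have h2 := hfT _ (hmemT s₀)
    rw [map_add, _root_.map_smul, smul_eq_mul] at h2
    have h3 : s₀ * f W = u - f M₀ - 1 := by rw [hs₀, div_mul_cancel₀ _ hW]
    rw [h3] at h2; linarith
  have hΦsupp : ∀ i j, i ≠ j → ¬ G.Adj i j → Φ i j = 0 := by
    intro i j hij hnadj
    have hf0 : f (sing i j) = 0 := by
      apply hdir
      · intro a
        simp only [hsing]
        rw [if_neg]
        rintro ⟨ha1, ha2⟩
        exact hij (ha1 ▸ ha2 ▸ rfl)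
      · intro a b hadj
        simp only [hsing]
        rw [if_neg]
        rintro ⟨rfl, rfl⟩
        exact hnadj hadj
    simp [hΦdef, hf0]
  have hqfΦ : ∀ x : V → ℝ, 0 ≤ qf Φ x := by
    intro x
    set xxT : V → V → ℝ := fun i j => x i * x j with hxxT
    have hfxxT : f xxT ≤ 0 := by
      have hin : ∀ ε : ℝ, 0 < ε → xxT + ε • A₀ ∈ pdSet V := by
        intro ε hε y hy
        rw [qf_addA, qf_smulA]
        have h1 : qf xxT y = (∑ i, x i * y i) ^ 2 := qf_xxT x y
        have h2 := hA₀pd y hy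
        rw [h1]
        have := sq_nonneg (∑ i, x i * y i)
        nlinarith
      have hb : ∀ ε : ℝ, 0 < ε → f xxT ≤ ε * (-(f A₀)) := by
        intro ε hε
        have h2 := hfle _ (hin ε hε)
        rw [map_add, _root_.map_smul, smul_eq_mul] at h2
        linarith
      exact le_zero_of_forall_le_eps_mul hb
    have heq : f xxT = -(qf Φ x) := by
      rw [hfrep xxT]
      congr 1
      unfold qf
      exact Finset.sum_congr rfl fun i _ => Finset.sum_congr rfl fun j _ => by
        simp only [hxxT]; ring
    rw [heq] at hfxxT
    linarith
  -- symmetrization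
  set Φs : V → V → ℝ := fun i j => (Φ i j + Φ j i) / 2 with hΦsdef
  have hΦs_symm : ∀ i j, Φs i j = Φs j i := by
    intro i j; simp only [hΦsdef]; ring
  have hqfΦs : ∀ x : V → ℝ, 0 ≤ qf Φs x := by
    intro x
    have hswap : ∑ i, ∑ j, x i * Φ j i * x j = ∑ i, ∑ j, x i * Φ i j * x j := by
      rw [Finset.sum_comm]
      exact Finset.sum_congr rfl fun i _ => Finset.sum_congr rfl fun j _ => by ring
    have heq : qf Φs x = qf Φ x := by
      unfold qf
      have hpt : ∀ i j, x i * Φs i j * x j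
          = (x i * Φ i j * x j) / 2 + (x i * Φ j i * x j) / 2 := by
        intro i j; simp only [hΦsdef]; ring
      rw [Finset.sum_congr rfl fun i _ => Finset.sum_congr rfl fun j _ => hpt i j]
      simp only [Finset.sum_add_distrib, ← Finset.sum_div]
      rw [hswap]
      ring
    rw [heq]; exact hqfΦ x
  have hΦs_supp : ∀ i j, i ≠ j → ¬ G.Adj i j → Φs i j = 0 := by
    intro i j hij hnadj
    have h2 : ¬ G.Adj j i := fun hc => hnadj hc.symm
    simp [hΦsdef, hΦsupp i j hij hnadj, hΦsupp j i (Ne.symm hij) h2]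
  have hΦs_diag : ∀ i, 0 ≤ Φs i i := by
    intro i
    have := hqfΦs (fun a => if a = i then 1 else 0)
    have heq : qf Φs (fun a => if a = i then 1 else 0) = Φs i i := by
      unfold qf
      rw [Finset.sum_eq_single i]
      · rw [Finset.sum_eq_single i] <;> simp
        intro b hb; simp [hb]
      · intro a _ ha
        apply Finset.sum_eq_zero
        intro j _
        simp [ha]
      · intro ha; exact absurd (Finset.mem_univ i) ha
    rwa [heq] at this
  -- for symmetric A, pairing with Φ equals pairing with Φs
  have hsymmpair : ∀ A : V → V → ℝ, (∀ i j, A i j = A j i) →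
      (∑ i, ∑ j, A i j * Φ i j) = ∑ i, ∑ j, A i j * Φs i j := by
    intro A hA
    have hswap : ∑ i, ∑ j, A i j * Φ j i = ∑ i, ∑ j, A i j * Φ i j := by
      rw [Finset.sum_comm]
      refine Finset.sum_congr rfl fun i _ => Finset.sum_congr rfl fun j _ => by
        rw [hA j i]
    have hpt : ∀ i j, A i j * Φs i j = (A i j * Φ i j) / 2 + (A i j * Φ j i) / 2 := by
      intro i j; simp only [hΦsdef]; ring
    rw [Finset.sum_congr rfl fun i _ => Finset.sum_congr rfl fun j _ => hpt i j]
    simp only [Finset.sum_add_distrib, ← Finset.sum_div]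
    rw [hswap]
    ring
  set tr : ℝ := ∑ i, Φs i i with htr
  have htr0 : 0 ≤ tr := Finset.sum_nonneg fun i _ => hΦs_diag i
  have htrpos : 0 < tr := by
    rcases eq_or_lt_of_le htr0 with heq | hlt
    · exfalso
      have hdiag0 : ∀ i, Φs i i = 0 := by
        intro i
        have := (Finset.sum_eq_zero_iff_of_nonneg
          (fun j (_ : j ∈ Finset.univ) => hΦs_diag j)).mp heq.symm
        exact this i (Finset.mem_univ i)
      have hΦs0 : ∀ i j, Φs i j = 0 := by
        intro i j
        by_cases hij : i = j
        · subst hij; exact hdiag0 i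
        · have hp := hqfΦs (fun a => if a = i then 1 else if a = j then (1:ℝ) else 0)
          have hm := hqfΦs (fun a => if a = i then 1 else if a = j then (-1:ℝ) else 0)
          rw [qf_two Φs hij 1] at hp
          rw [qf_two Φs hij (-1)] at hm
          rw [hdiag0 i, hdiag0 j, hΦs_symm j i] at hp hm
          have : Φs i j = 0 := by nlinarith
          exact this
      have hf0 : ∀ A : V → V → ℝ, (∀ i j, A i j = A j i) → f A = 0 := by
        intro A hA
        rw [hfrep A, hsymmpair A hA]
        have : (∑ i, ∑ j, A i j * Φs i j) = 0 := by
          apply Finset.sum_eq_zero; intro i _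
          apply Finset.sum_eq_zero; intro j _
          rw [hΦs0 i j, mul_zero]
        rw [this, neg_zero]
      have h1 := hfs A₀ hA₀pd
      have h2 := hfT M₀ hM₀T
      rw [hf0 A₀ hA₀symm] at h1
      rw [hf0 M₀ hM₀symm] at h2
      linarith
    · exact hlt
  -- value inequality
  have hM₀pair : (∑ i, ∑ j, M₀ i j * Φs i j)
      = (t' - 1) * tr - (∑ i, ∑ j, if G.Adj i j then Φs i j else 0) := by
    have hpt : ∀ i j, M₀ i j * Φs i j
        = (if i = j then (t' - 1) * Φs i j else 0)
          - (if G.Adj i j then Φs i j else 0) := by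
      intro i j
      by_cases hij : i = j
      · subst hij
        simp [hM₀def, SimpleGraph.irrefl]
      · by_cases hadj : G.Adj i j
        · simp [hM₀def, hij, hadj]
        · simp [hM₀def, hij, hadj, hΦs_supp i j hij hadj]
    rw [Finset.sum_congr rfl fun i _ => Finset.sum_congr rfl fun j _ => hpt i j]
    simp only [Finset.sum_sub_distrib]
    congr 1
    rw [Finset.mul_sum]
    refine Finset.sum_congr rfl fun i _ => ?_
    rw [Finset.sum_eq_single i]
    · simp
    · intro b _ hb; simp [Ne.symm hb]
    · intro hb; exact absurd (Finset.mem_univ i) hb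
  have hM₀le : (∑ i, ∑ j, M₀ i j * Φs i j) ≤ 0 := by
    have h2 := hfT M₀ hM₀T
    rw [hfrep M₀, hsymmpair M₀ hM₀symm] at h2
    linarith
  have hadjge : (t' - 1) * tr ≤ (∑ i, ∑ j, if G.Adj i j then Φs i j else 0) := by
    rw [hM₀pair] at hM₀le; linarith
  have hsigma : (∑ i, ∑ j, Φs i j)
      = tr + (∑ i, ∑ j, if G.Adj i j then Φs i j else 0) := by
    have hpt : ∀ i j, Φs i j = (if i = j then Φs i j else 0)
        + (if G.Adj i j then Φs i j else 0) := by
      intro i j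
      by_cases hij : i = j
      · subst hij; simp [G.loopless.irrefl i]
      · by_cases hadj : G.Adj i j
        · simp [hij, hadj]
        · simp [hij, hadj, hΦs_supp i j hij hadj]
    conv_lhs => rw [Finset.sum_congr rfl fun i _ => Finset.sum_congr rfl fun j _ => hpt i j]
    simp only [Finset.sum_add_distrib]
    congr 1
    rw [htr]
    refine Finset.sum_congr rfl fun i _ => ?_
    rw [Finset.sum_eq_single i]
    · simp
    · intro b _ hb; simp [Ne.symm hb]
    · intro hb; exact absurd (Finset.mem_univ i) hb
  have hsigma_ge : t' * tr ≤ ∑ i, ∑ j, Φs i j := by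
    rw [hsigma]
    nlinarith
  -- normalize and decompose
  set MB : Matrix V V ℝ := Matrix.of (fun i j => Φs i j / tr) with hMBdef
  have hMBpsd : MB.PosSemidef := by
    refine Matrix.PosSemidef.of_dotProduct_mulVec_nonneg ?_ ?_
    · ext i j
      simp only [Matrix.conjTranspose_apply, hMBdef, Matrix.of_apply, star_trivial]
      rw [hΦs_symm j i]
    · intro x
      have hx : star x ⬝ᵥ (MB *ᵥ x) = qf (fun i j => Φs i j / tr) x := by
        simp [dotProduct, Matrix.mulVec, qf, Finset.mul_sum, mul_assoc,
          hMBdef, Matrix.of_apply]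
      rw [hx]
      have heq : qf (fun i j => Φs i j / tr) x = tr⁻¹ * qf Φs x := by
        have : (fun i j => Φs i j / tr) = tr⁻¹ • Φs := by
          funext i j; simp [div_eq_inv_mul]
        rw [this, qf_smulA]
      rw [heq]
      exact mul_nonneg (by positivity) (hqfΦs x)
  obtain ⟨N, hN⟩ := psd_eq_transpose_mul_self hMBpsd
  have hentry : ∀ i j, (∑ a, N a i * N a j) = Φs i j / tr := by
    intro i j
    have : (Nᴴ * N) i j = ∑ a, N a i * N a j := by
      simp [Matrix.mul_apply, Matrix.conjTranspose_apply]
    rw [← this, ← hN]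
    simp [hMBdef]
  refine ⟨fun i a => N a i, ?_, ?_, ?_⟩
  · intro i j hij hnadj
    rw [hentry i j, hΦs_supp i j hij hnadj, zero_div]
  · rw [Finset.sum_congr rfl fun i _ => hentry i i]
    rw [← Finset.sum_div, ← htr]
    exact div_self htrpos.ne'
  · have heq2 : (∑ i, ∑ j, ∑ a, N a i * N a j) = (∑ i, ∑ j, Φs i j) / tr := by
      rw [Finset.sum_congr rfl fun i _ =>
        Finset.sum_congr rfl fun j _ => hentry i j]
      simp only [← Finset.sum_div]
    rw [heq2, le_div_iff₀ htrpos]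
    nlinarith

end SVCAux
namespace SVCAux

open Finset

/-- Sum-of-squares form of a Gram-type quadratic form. -/
lemma sum_sq_form {ι κ : Type*} [Fintype ι] [Fintype κ] (v : ι → κ → ℝ) (x : ι → ℝ) :
    ∑ u, ∑ w, x u * x w * (∑ a, v u a * v w a) = ∑ a, (∑ u, x u * v u a) ^ 2 := by
  have h1 : ∀ u w : ι, x u * x w * (∑ a, v u a * v w a)
      = ∑ a, (x u * v u a) * (x w * v w a) := by
    intro u w
    rw [Finset.mul_sum]
    exact Finset.sum_congr rfl fun a _ => by ring
  rw [Finset.sum_congr rfl fun u (_ : u ∈ Finset.univ) =>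
    Finset.sum_congr rfl fun w _ => h1 u w]
  rw [Finset.sum_congr rfl fun u (_ : u ∈ Finset.univ) => Finset.sum_comm]
  rw [Finset.sum_comm]
  refine Finset.sum_congr rfl fun a _ => ?_
  rw [sq, Finset.sum_mul_sum]

lemma sum_sq_form_nonneg {ι κ : Type*} [Fintype ι] [Fintype κ] (v : ι → κ → ℝ)
    (x : ι → ℝ) : 0 ≤ ∑ u, ∑ w, x u * x w * (∑ a, v u a * v w a) := by
  rw [sum_sq_form]
  exact Finset.sum_nonneg fun a _ => sq_nonneg _

lemma sum_prod_mul {A B : Type*} [Fintype A] [Fintype B] (f : A → ℝ) (g : B → ℝ) :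
    (∑ u : A × B, f u.1 * g u.2) = (∑ i, f i) * (∑ l, g l) := by
  rw [Finset.sum_mul_sum]
  exact Fintype.sum_prod_type _

lemma sum_prod_factor {A B : Type*} [Fintype A] [Fintype B] (F : A → A → ℝ)
    (G' : B → B → ℝ) :
    ∑ u : A × B, ∑ w : A × B, F u.1 w.1 * G' u.2 w.2
      = (∑ i, ∑ j, F i j) * (∑ l, ∑ k, G' l k) :=
  calc ∑ u : A × B, ∑ w : A × B, F u.1 w.1 * G' u.2 w.2
      = ∑ u : A × B, (∑ j, F u.1 j) * (∑ k, G' u.2 k) :=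
        Finset.sum_congr rfl fun u _ =>
          sum_prod_mul (fun j => F u.1 j) (fun k => G' u.2 k)
    _ = (∑ i, ∑ j, F i j) * (∑ l, ∑ k, G' l k) :=
        sum_prod_mul (fun i => ∑ j, F i j) (fun l => ∑ k, G' l k)

set_option maxHeartbeats 2000000 in
/-- The key SDP pairing inequality. -/
lemma key_ineq {α β : Type*} [Fintype α] [Fintype β]
    (G : SimpleGraph α) (H : SimpleGraph β) {t s : ℝ} (hs : 1 < s)
    {d : ℕ} {p : α × β → Fin d → ℝ} (hp : IsStrictVecColoring (catProd G H) t p)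
    {dP : ℕ} {P : α → Fin dP → ℝ} (hP : IsStrictVecColoring G s P)
    {dQ : ℕ} {Q : β → Fin dQ → ℝ} (hQ : IsStrictVecColoring H s Q)
    (b : α → α → ℝ)
    (hbsupp : ∀ i j, i ≠ j → ¬ G.Adj i j → (∑ a, b i a * b j a) = 0)
    (hbtr : (∑ i, ∑ a, b i a * b i a) = 1)
    (c : β → β → ℝ)
    (hcsupp : ∀ l k, l ≠ k → ¬ H.Adj l k → (∑ e, c l e * c k e) = 0)
    (hctr : (∑ l, ∑ e, c l e * c l e) = 1) :
    ((∑ i, ∑ j, ∑ a, b i a * b j a) - 1) * ((∑ l, ∑ k, ∑ e, c l e * c k e) - 1)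
      ≤ (t - 1) * (s - 1) := by
  classical
  have hs0 : (0:ℝ) < s := lt_trans zero_lt_one hs
  have hs1 : (0:ℝ) ≤ s - 1 := by linarith
  set Z : (α × β) → (α × β) → ℝ :=
    fun u w => (∑ a, b u.1 a * b w.1 a) * (∑ e, c u.2 e * c w.2 e) *
      ((∑ m, P u.1 m * P w.1 m) * (∑ m, Q u.2 m * Q w.2 m) + (s - 1)) with hZ
  have hadj_iff : ∀ u w : α × β,
      (catProd G H).Adj u w ↔ (G.Adj u.1 w.1 ∧ H.Adj u.2 w.2) := fun u w => Iff.rfl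
  have hPdd : ∀ i, (∑ m, P i m * P i m) = s - 1 := fun i => by
    simpa [dotProduct] using hP.1 i
  have hPde : ∀ i j, G.Adj i j → (∑ m, P i m * P j m) = -1 := fun i j hij => by
    simpa [dotProduct] using hP.2 i j hij
  have hQdd : ∀ l, (∑ m, Q l m * Q l m) = s - 1 := fun l => by
    simpa [dotProduct] using hQ.1 l
  have hQde : ∀ l k, H.Adj l k → (∑ m, Q l m * Q k m) = -1 := fun l k hlk => by
    simpa [dotProduct] using hQ.2 l k hlk
  have hpdd : ∀ u, (∑ m, p u m * p u m) = t - 1 := fun u => by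
    simpa [dotProduct] using hp.1 u
  have hpde : ∀ u w, (catProd G H).Adj u w → (∑ m, p u m * p w m) = -1 :=
    fun u w huw => by simpa [dotProduct] using hp.2 u w huw
  -- Step A : Z is positive semidefinite as a quadratic form
  have hqZ : ∀ x : α × β → ℝ, 0 ≤ ∑ u, ∑ w, x u * x w * Z u w := by
    intro x
    set v1 : (α × β) → ((α × β) × (Fin dP × Fin dQ)) → ℝ :=
      fun u q => b u.1 q.1.1 * c u.2 q.1.2 * P u.1 q.2.1 * Q u.2 q.2.2 with hv1
    set v2 : (α × β) → (α × β) → ℝ :=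
      fun u q => Real.sqrt (s - 1) * (b u.1 q.1 * c u.2 q.2) with hv2
    have hgram1 : ∀ u w : α × β,
        (∑ a, b u.1 a * b w.1 a) * (∑ e, c u.2 e * c w.2 e) *
          ((∑ m, P u.1 m * P w.1 m) * (∑ m, Q u.2 m * Q w.2 m))
        = ∑ q, v1 u q * v1 w q := by
      intro u w
      have e1 : ((∑ a, b u.1 a * b w.1 a) * (∑ e, c u.2 e * c w.2 e))
          = ∑ q : α × β, (b u.1 q.1 * b w.1 q.1) * (c u.2 q.2 * c w.2 q.2) :=
        (sum_prod_mul _ _).symm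
      have e2 : ((∑ m, P u.1 m * P w.1 m) * (∑ n, Q u.2 n * Q w.2 n))
          = ∑ r : Fin dP × Fin dQ, (P u.1 r.1 * P w.1 r.1) * (Q u.2 r.2 * Q w.2 r.2) :=
        (sum_prod_mul _ _).symm
      calc (∑ a, b u.1 a * b w.1 a) * (∑ e, c u.2 e * c w.2 e) *
            ((∑ m, P u.1 m * P w.1 m) * (∑ m, Q u.2 m * Q w.2 m))
          = ((∑ a, b u.1 a * b w.1 a) * (∑ e, c u.2 e * c w.2 e)) *
            ((∑ m, P u.1 m * P w.1 m) * (∑ n, Q u.2 n * Q w.2 n)) := by ring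
        _ = (∑ q : α × β, (b u.1 q.1 * b w.1 q.1) * (c u.2 q.2 * c w.2 q.2)) *
            (∑ r : Fin dP × Fin dQ,
              (P u.1 r.1 * P w.1 r.1) * (Q u.2 r.2 * Q w.2 r.2)) := by rw [e1, e2]
        _ = ∑ q : α × β, ∑ r : Fin dP × Fin dQ,
              ((b u.1 q.1 * b w.1 q.1) * (c u.2 q.2 * c w.2 q.2)) *
              ((P u.1 r.1 * P w.1 r.1) * (Q u.2 r.2 * Q w.2 r.2)) :=
            Finset.sum_mul_sum _ _ _ _
        _ = ∑ q : α × β, ∑ r : Fin dP × Fin dQ, v1 u (q, r) * v1 w (q, r) :=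
            Finset.sum_congr rfl fun q _ => Finset.sum_congr rfl fun r _ => by
              simp only [hv1]; ring
        _ = ∑ q, v1 u q * v1 w q :=
            (Fintype.sum_prod_type (fun qq : (α × β) × (Fin dP × Fin dQ) =>
              v1 u qq * v1 w qq)).symm
    have hgram2 : ∀ u w : α × β,
        (∑ a, b u.1 a * b w.1 a) * (∑ e, c u.2 e * c w.2 e) * (s - 1)
        = ∑ q, v2 u q * v2 w q := by
      intro u w
      have e3 : ((∑ a, b u.1 a * b w.1 a) * (∑ e, c u.2 e * c w.2 e))
          = ∑ q : α × β, (b u.1 q.1 * b w.1 q.1) * (c u.2 q.2 * c w.2 q.2) :=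
        (sum_prod_mul _ _).symm
      have hss : Real.sqrt (s - 1) * Real.sqrt (s - 1) = s - 1 :=
        Real.mul_self_sqrt hs1
      calc (∑ a, b u.1 a * b w.1 a) * (∑ e, c u.2 e * c w.2 e) * (s - 1)
          = (s - 1) * ((∑ a, b u.1 a * b w.1 a) * (∑ e, c u.2 e * c w.2 e)) := by ring
        _ = (s - 1) * ∑ q : α × β,
              (b u.1 q.1 * b w.1 q.1) * (c u.2 q.2 * c w.2 q.2) := by rw [e3]
        _ = ∑ q : α × β,
              (s - 1) * ((b u.1 q.1 * b w.1 q.1) * (c u.2 q.2 * c w.2 q.2)) :=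
            Finset.mul_sum _ _ _
        _ = ∑ q, v2 u q * v2 w q :=
            Finset.sum_congr rfl fun q _ => by
              simp only [hv2]
              linear_combination (-((b u.1 q.1 * c u.2 q.2) * (b w.1 q.1 * c w.2 q.2))) * hss
    have hZsplit : ∀ u w : α × β, x u * x w * Z u w
        = x u * x w * (∑ q, v1 u q * v1 w q)
          + x u * x w * (∑ q, v2 u q * v2 w q) := by
      intro u w
      rw [← hgram1, ← hgram2]
      simp only [hZ]
      ring
    rw [Finset.sum_congr rfl fun u (_ : u ∈ Finset.univ) =>
      Finset.sum_congr rfl fun w _ => hZsplit u w]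
    simp only [Finset.sum_add_distrib]
    have h1 := sum_sq_form_nonneg v1 x
    have h2 := sum_sq_form_nonneg v2 x
    linarith
  -- Step B : pairing Z with the Gram matrix of p is nonnegative
  have hZR : 0 ≤ ∑ u, ∑ w, (∑ m, p u m * p w m) * Z u w := by
    have hswap : (∑ u, ∑ w, (∑ m, p u m * p w m) * Z u w)
        = ∑ m, ∑ u, ∑ w, p u m * p w m * Z u w := by
      rw [Finset.sum_congr rfl fun u (_ : u ∈ Finset.univ) =>
        Finset.sum_congr rfl fun w _ => show (∑ m, p u m * p w m) * Z u w
          = ∑ m, p u m * p w m * Z u w from Finset.sum_mul _ _ _]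
      rw [Finset.sum_congr rfl fun u (_ : u ∈ Finset.univ) => Finset.sum_comm]
      rw [Finset.sum_comm]
    rw [hswap]
    exact Finset.sum_nonneg fun m _ => hqZ (fun u => p u m)
  -- Step C : evaluate the pairing
  have hpt : ∀ u w : α × β, (∑ m, p u m * p w m) * Z u w
      = s * (s - 1) * (t - 1) *
          (if u = w then (∑ a, b w.1 a * b w.1 a) * (∑ e, c w.2 e * c w.2 e) else 0)
        - s * (if (catProd G H).Adj u w
            then (∑ a, b u.1 a * b w.1 a) * (∑ e, c u.2 e * c w.2 e) else 0) := by
    intro u w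
    by_cases hne : u = w
    · subst hne
      rw [if_pos rfl, if_neg (SimpleGraph.irrefl _)]
      rw [hpdd u]
      simp only [hZ]
      rw [hPdd, hQdd]
      ring
    · rw [if_neg hne]
      by_cases hadj : (catProd G H).Adj u w
      · rw [if_pos hadj]
        obtain ⟨h1, h2⟩ := (hadj_iff u w).mp hadj
        rw [hpde u w hadj]
        simp only [hZ]
        rw [hPde _ _ h1, hQde _ _ h2]
        ring
      · rw [if_neg hadj]
        have hZ0 : Z u w = 0 := by
          by_cases h1 : u.1 = w.1
          · have h2 : u.2 ≠ w.2 := fun hq => hne (Prod.ext h1 hq)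
            by_cases h3 : H.Adj u.2 w.2
            · simp only [hZ]
              rw [← h1, hPdd, hQde _ _ h3]
              ring
            · simp only [hZ]
              rw [hcsupp _ _ h2 h3]
              ring
          · by_cases h4 : G.Adj u.1 w.1
            · have h5 : ¬ H.Adj u.2 w.2 := fun hH => hadj ((hadj_iff u w).mpr ⟨h4, hH⟩)
              by_cases h6 : u.2 = w.2
              · simp only [hZ]
                rw [← h6, hQdd, hPde _ _ h4]
                ring
              · simp only [hZ]
                rw [hcsupp _ _ h6 h5]
                ring
            · simp only [hZ]
              rw [hbsupp _ _ h1 h4]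
              ring
        rw [hZ0]
        ring
  have hdiagsum : (∑ u : α × β, ∑ w : α × β,
      (if u = w then (∑ a, b w.1 a * b w.1 a) * (∑ e, c w.2 e * c w.2 e) else 0)) = 1 := by
    have hin : ∀ u : α × β, (∑ w : α × β,
        (if u = w then (∑ a, b w.1 a * b w.1 a) * (∑ e, c w.2 e * c w.2 e) else 0))
        = (∑ a, b u.1 a * b u.1 a) * (∑ e, c u.2 e * c u.2 e) := by
      intro u
      rw [Finset.sum_ite_eq]
      exact if_pos (Finset.mem_univ u)
    rw [Finset.sum_congr rfl fun u _ => hin u]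
    exact (sum_prod_mul (fun i => ∑ a, b i a * b i a)
      (fun l => ∑ e, c l e * c l e)).trans (by rw [hbtr, hctr, one_mul])
  have hedgesum : (∑ u : α × β, ∑ w : α × β,
      (if (catProd G H).Adj u w
        then (∑ a, b u.1 a * b w.1 a) * (∑ e, c u.2 e * c w.2 e) else 0))
      = ((∑ i, ∑ j, ∑ a, b i a * b j a) - 1)
        * ((∑ l, ∑ k, ∑ e, c l e * c k e) - 1) := by
    have hsplit : ∀ u w : α × β,
        (if (catProd G H).Adj u w
          then (∑ a, b u.1 a * b w.1 a) * (∑ e, c u.2 e * c w.2 e) else 0)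
        = (if G.Adj u.1 w.1 then (∑ a, b u.1 a * b w.1 a) else 0)
          * (if H.Adj u.2 w.2 then (∑ e, c u.2 e * c w.2 e) else 0) := by
      intro u w
      by_cases h1 : G.Adj u.1 w.1
      · by_cases h2 : H.Adj u.2 w.2
        · rw [if_pos ((hadj_iff u w).mpr ⟨h1, h2⟩), if_pos h1, if_pos h2]
        · rw [if_neg (fun hc => h2 ((hadj_iff u w).mp hc).2), if_pos h1, if_neg h2,
            mul_zero]
      · rw [if_neg (fun hc => h1 ((hadj_iff u w).mp hc).1), if_neg h1, zero_mul]
    have hEB : (∑ i, ∑ j, if G.Adj i j then (∑ a, b i a * b j a) else 0)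
        = (∑ i, ∑ j, ∑ a, b i a * b j a) - 1 := by
      have hptB : ∀ i j : α, (∑ a, b i a * b j a)
          = (if i = j then (∑ a, b i a * b j a) else 0)
            + (if G.Adj i j then (∑ a, b i a * b j a) else 0) := by
        intro i j
        by_cases hij : i = j
        · subst hij
          rw [if_pos rfl, if_neg (SimpleGraph.irrefl _), add_zero]
        · by_cases hadj : G.Adj i j
          · rw [if_neg hij, if_pos hadj, zero_add]
          · rw [if_neg hij, if_neg hadj, hbsupp _ _ hij hadj, add_zero]
      have hsum : (∑ i, ∑ j, ∑ a, b i a * b j a)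
          = (∑ i, ∑ j, (if i = j then (∑ a, b i a * b j a) else 0))
            + (∑ i, ∑ j, (if G.Adj i j then (∑ a, b i a * b j a) else 0)) := by
        rw [← Finset.sum_add_distrib]
        refine Finset.sum_congr rfl fun i _ => ?_
        rw [← Finset.sum_add_distrib]
        exact Finset.sum_congr rfl fun j _ => hptB i j
      have hdiag : (∑ i, ∑ j, (if i = j then (∑ a, b i a * b j a) else 0)) = 1 := by
        rw [← hbtr]
        refine Finset.sum_congr rfl fun i _ => ?_
        rw [Finset.sum_ite_eq, if_pos (Finset.mem_univ i)]
      rw [hdiag] at hsum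
      linarith
    have hEC : (∑ l, ∑ k, if H.Adj l k then (∑ e, c l e * c k e) else 0)
        = (∑ l, ∑ k, ∑ e, c l e * c k e) - 1 := by
      have hptC : ∀ l k : β, (∑ e, c l e * c k e)
          = (if l = k then (∑ e, c l e * c k e) else 0)
            + (if H.Adj l k then (∑ e, c l e * c k e) else 0) := by
        intro l k
        by_cases hlk : l = k
        · subst hlk
          rw [if_pos rfl, if_neg (SimpleGraph.irrefl _), add_zero]
        · by_cases hadj : H.Adj l k
          · rw [if_neg hlk, if_pos hadj, zero_add]
          · rw [if_neg hlk, if_neg hadj, hcsupp _ _ hlk hadj, add_zero]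
      have hsum : (∑ l, ∑ k, ∑ e, c l e * c k e)
          = (∑ l, ∑ k, (if l = k then (∑ e, c l e * c k e) else 0))
            + (∑ l, ∑ k, (if H.Adj l k then (∑ e, c l e * c k e) else 0)) := by
        rw [← Finset.sum_add_distrib]
        refine Finset.sum_congr rfl fun l _ => ?_
        rw [← Finset.sum_add_distrib]
        exact Finset.sum_congr rfl fun k _ => hptC l k
      have hdiag : (∑ l, ∑ k, (if l = k then (∑ e, c l e * c k e) else 0)) = 1 := by
        rw [← hctr]
        refine Finset.sum_congr rfl fun l _ => ?_
        rw [Finset.sum_ite_eq, if_pos (Finset.mem_univ l)]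
      rw [hdiag] at hsum
      linarith
    rw [Finset.sum_congr rfl fun u (_ : u ∈ Finset.univ) =>
      Finset.sum_congr rfl fun w _ => hsplit u w]
    exact (sum_prod_factor
      (fun i j => if G.Adj i j then (∑ a, b i a * b j a) else 0)
      (fun l k => if H.Adj l k then (∑ e, c l e * c k e) else 0)).trans
      (by rw [hEB, hEC])
  have hmain : (∑ u, ∑ w, (∑ m, p u m * p w m) * Z u w)
      = s * (s - 1) * (t - 1)
        - s * (((∑ i, ∑ j, ∑ a, b i a * b j a) - 1)
          * ((∑ l, ∑ k, ∑ e, c l e * c k e) - 1)) := by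
    rw [Finset.sum_congr rfl fun u (_ : u ∈ Finset.univ) =>
      Finset.sum_congr rfl fun w _ => hpt u w]
    simp only [Finset.sum_sub_distrib, ← Finset.mul_sum]
    rw [hdiagsum, hedgesum]
    ring
  rw [hmain] at hZR
  nlinarith

end SVCAux
namespace SVCAux

open Finset

lemma min_le_of_mem_fs_prod {α β : Type*} [Fintype α] [Fintype β]
    (G : SimpleGraph α) (H : SimpleGraph β) {t : ℝ} (ht : t ∈ fs (catProd G H)) :
    min (strictVecChrom G) (strictVecChrom H) ≤ t := by
  classical
  have h1G : 1 ≤ strictVecChrom G := le_csInf (fs_nonempty G) fun x hx => hx.1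
  have h1H : 1 ≤ strictVecChrom H := le_csInf (fs_nonempty H) fun x hx => hx.1
  have ht1 : 1 ≤ t := ht.1
  by_contra hcon
  push_neg at hcon
  have htG : t < strictVecChrom G := lt_of_lt_of_le hcon (min_le_left _ _)
  have htH : t < strictVecChrom H := lt_of_lt_of_le hcon (min_le_right _ _)
  have hbG1 : 1 < strictVecChrom G := lt_of_le_of_lt ht1 htG
  have hbH1 : 1 < strictVecChrom H := lt_of_le_of_lt ht1 htH
  obtain ⟨d, p, hp⟩ := ht.2
  -- the key quantitative bound
  have hkey : ∀ t₁ t₂ s' : ℝ, 1 ≤ t₁ → t₁ < strictVecChrom G → 1 ≤ t₂ →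
      t₂ < strictVecChrom H → max (strictVecChrom G) (strictVecChrom H) < s' →
      (t₁ - 1) * (t₂ - 1) ≤ (t - 1) * (s' - 1) := by
    intro t₁ t₂ s' h11 h1G' h21 h2H' hs'
    obtain ⟨b, hbsupp, hbtr, hbval⟩ := exists_dual_rep G h11 h1G'
    obtain ⟨c, hcsupp, hctr, hcval⟩ := exists_dual_rep H h21 h2H'
    have hs'1 : 1 < s' :=
      lt_of_le_of_lt (le_trans h1G (le_max_left _ _)) hs'
    have hsG : s' ∈ fs G := by
      obtain ⟨t₀, ht₀, ht₀lt⟩ := exists_lt_of_csInf_lt (fs_nonempty G)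
        (show strictVecChrom G < s' from
          lt_of_le_of_lt (le_max_left _ _) hs')
      exact fs_upward ht₀ ht₀lt.le
    have hsH : s' ∈ fs H := by
      obtain ⟨t₀, ht₀, ht₀lt⟩ := exists_lt_of_csInf_lt (fs_nonempty H)
        (show strictVecChrom H < s' from
          lt_of_le_of_lt (le_max_right _ _) hs')
      exact fs_upward ht₀ ht₀lt.le
    obtain ⟨dP, P, hP⟩ := hsG.2
    obtain ⟨dQ, Q, hQ⟩ := hsH.2
    have hineq := key_ineq G H hs'1 hp hP hQ b hbsupp hbtr c hcsupp hctr
    have h3 : (t₁ - 1) * (t₂ - 1)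
        ≤ ((∑ i, ∑ j, ∑ a, b i a * b j a) - 1)
          * ((∑ l, ∑ k, ∑ e, c l e * c k e) - 1) := by
      have hb1 : t₁ - 1 ≤ (∑ i, ∑ j, ∑ a, b i a * b j a) - 1 := by linarith
      have hc1 : t₂ - 1 ≤ (∑ l, ∑ k, ∑ e, c l e * c k e) - 1 := by linarith
      have ht₁0 : (0:ℝ) ≤ t₁ - 1 := by linarith
      have ht₂0 : (0:ℝ) ≤ t₂ - 1 := by linarith
      exact mul_le_mul hb1 hc1 ht₂0 (by linarith)
    linarith
  -- choose parameters to contradict t < min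
  set bG := strictVecChrom G with hbG
  set bH := strictVecChrom H with hbH
  set m : ℝ := min bG bH with hm
  set M : ℝ := max bG bH with hM
  have hm1 : 1 < m := lt_min hbG1 hbH1
  have hM1 : 1 < M := lt_of_lt_of_le hbG1 (le_max_left _ _)
  have htm : t < m := hcon
  have hDpos : 0 < m - t := by linarith
  have hY : (0:ℝ) < bG + bH + m := by
    have : (1:ℝ) ≤ bG := h1G
    have : (1:ℝ) ≤ bH := h1H
    nlinarith
  set δ : ℝ := min ((m - 1) / 2) ((m - t) * (M - 1) / (2 * (bG + bH + m))) with hδ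
  have hδpos : 0 < δ := by
    apply lt_min
    · linarith
    · have h1 : (0:ℝ) < (m - t) * (M - 1) := mul_pos hDpos (by linarith)
      positivity
  have hδm : δ ≤ (m - 1) / 2 := min_le_left _ _
  have hδD : δ ≤ (m - t) * (M - 1) / (2 * (bG + bH + m)) := min_le_right _ _
  have hmG : m ≤ bG := min_le_left _ _
  have hmH : m ≤ bH := min_le_right _ _
  have hGM : bG ≤ M := le_max_left _ _
  have hHM : bH ≤ M := le_max_right _ _
  have ht₁1 : 1 ≤ bG - δ := by linarith
  have ht₂1 : 1 ≤ bH - δ := by linarith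
  have hineq := hkey (bG - δ) (bH - δ) (M + δ) ht₁1 (by linarith) ht₂1
    (by linarith) (by linarith)
  -- derive contradiction
  have e2 : (bG - 1) * (bH - 1) = (m - 1) * (M - 1) := by
    rcases le_total bG bH with h | h
    · rw [hm, hM, min_eq_left h, max_eq_right h]
    · rw [hm, hM, min_eq_right h, max_eq_left h]; ring
  have e1 : (bG - 1) * (bH - 1) - δ * (bG + bH) ≤ (bG - δ - 1) * (bH - δ - 1) := by
    nlinarith [sq_nonneg δ, hδpos]
  have e3 : δ * (bG + bH + m) ≤ (m - t) * (M - 1) / 2 := by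
    have h2 := mul_le_mul_of_nonneg_right hδD (le_of_lt hY)
    have h3 : (m - t) * (M - 1) / (2 * (bG + bH + m)) * (bG + bH + m)
        = (m - t) * (M - 1) / 2 := by
      field_simp
    rw [h3] at h2
    exact h2
  have e4 : (t - 1) * δ ≤ m * δ := mul_le_mul_of_nonneg_right (by linarith) hδpos.le
  have c1 : (m - 1) * (M - 1) - δ * (bG + bH) ≤ (t - 1) * (M - 1) + (t - 1) * δ := by
    calc (m - 1) * (M - 1) - δ * (bG + bH)
        = (bG - 1) * (bH - 1) - δ * (bG + bH) := by rw [e2]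
      _ ≤ (bG - δ - 1) * (bH - δ - 1) := e1
      _ ≤ (t - 1) * (M + δ - 1) := hineq
      _ = (t - 1) * (M - 1) + (t - 1) * δ := by ring
  have c2 : (m - t) * (M - 1) ≤ δ * (bG + bH) + (t - 1) * δ := by
    have hr : (m - t) * (M - 1) = ((m - 1) * (M - 1) - δ * (bG + bH))
        - ((t - 1) * (M - 1)) + δ * (bG + bH) := by ring
    linarith
  have c3 : δ * (bG + bH) + (t - 1) * δ ≤ δ * (bG + bH + m) := by
    have hr : δ * (bG + bH + m) = δ * (bG + bH) + m * δ := by ring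
    linarith
  have hX : 0 < (m - t) * (M - 1) := mul_pos hDpos (by linarith)
  linarith

lemma strictVecChrom_catProd_aux {α β : Type*} [Fintype α] [Fintype β]
    (G : SimpleGraph α) (H : SimpleGraph β) :
    strictVecChrom (catProd G H) = min (strictVecChrom G) (strictVecChrom H) := by
  apply le_antisymm
  · refine le_min ?_ ?_
    · exact csInf_le_csInf (fs_bddBelow _) (fs_nonempty G) (fs_left_subset G H)
    · exact csInf_le_csInf (fs_bddBelow _) (fs_nonempty H) (fs_right_subset G H)
  · exact le_csInf (fs_nonempty (catProd G H)) fun t ht => min_le_of_mem_fs_prod G H ht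

end SVCAux

/-- Strict vector coloring analog of Hedetniemi's conjecture:
`χ_sv(G × H) = min {χ_sv(G), χ_sv(H)}`. -/
theorem strictVecChrom_catProd {α β : Type*} [Fintype α] [Fintype β]
    (G : SimpleGraph α) (H : SimpleGraph β) :
    strictVecChrom (catProd G H) = min (strictVecChrom G) (strictVecChrom H) := by
  exact SVCAux.strictVecChrom_catProd_aux G H
end

section
/- Let G be a finite simple graph, let M be the Gram matrix of a vector t-coloring of G (a feasible primal solution with objective value t), and let B be a feasible dual solution for χ_v(G) with objective value s = sum(B). Then tr(MB) = (t − s) + Σ (M_ij + 1)B_ij, where the sum is over ordered pairs (i,j) of adjacent vertices. Consequently, M and B are both optimal if and only if MB = 0 and B_ij = 0 whenever M_ij < −1. -/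
open Matrix Kronecker

section AuxSlack

open Matrix

variable {V : Type*} [Fintype V]

open scoped MatrixOrder in
private noncomputable def Matrix.PosSemidef.sqrt [DecidableEq V] {M : Matrix V V ℝ}
    (_hM : M.PosSemidef) : Matrix V V ℝ :=
  CFC.sqrt M

open scoped MatrixOrder in
private lemma Matrix.PosSemidef.posSemidef_sqrt [DecidableEq V] {M : Matrix V V ℝ}
    (hM : M.PosSemidef) : hM.sqrt.PosSemidef :=
  (CFC.sqrt_nonneg M).posSemidef

open scoped MatrixOrder in
private lemma Matrix.PosSemidef.sqrt_mul_self [DecidableEq V] {M : Matrix V V ℝ}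
    (hM : M.PosSemidef) : hM.sqrt * hM.sqrt = M :=
  CFC.sqrt_mul_sqrt_self M hM.nonneg

private lemma trace_ct_mul' (X : Matrix V V ℝ) : (Xᴴ * X).trace = ∑ i, ∑ j, (X j i)^2 := by
  simp [Matrix.trace, Matrix.diag, Matrix.mul_apply, sq]

private lemma trace_eq_ct' [DecidableEq V] {M B : Matrix V V ℝ}
    (hM : M.PosSemidef) (hB : B.PosSemidef) :
    (M * B).trace = ((hM.sqrt * hB.sqrt)ᴴ * (hM.sqrt * hB.sqrt)).trace := by
  rw [conjTranspose_mul, hM.posSemidef_sqrt.1, hB.posSemidef_sqrt.1]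
  conv_rhs => rw [show hB.sqrt * hM.sqrt * (hM.sqrt * hB.sqrt)
      = hB.sqrt * (hM.sqrt * hM.sqrt * hB.sqrt) from by
        rw [Matrix.mul_assoc, Matrix.mul_assoc],
    hM.sqrt_mul_self, Matrix.trace_mul_comm, Matrix.mul_assoc, hB.sqrt_mul_self]

private lemma psd_trace_nonneg' [DecidableEq V] {M B : Matrix V V ℝ}
    (hM : M.PosSemidef) (hB : B.PosSemidef) : 0 ≤ (M * B).trace := by
  rw [trace_eq_ct' hM hB, trace_ct_mul']
  positivity

private lemma psd_mul_eq_zero' [DecidableEq V] {M B : Matrix V V ℝ}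
    (hM : M.PosSemidef) (hB : B.PosSemidef) (h : (M * B).trace = 0) : M * B = 0 := by
  rw [trace_eq_ct' hM hB, trace_ct_mul'] at h
  have hX : hM.sqrt * hB.sqrt = 0 := by
    ext j i
    have h1 : ∀ i ∈ Finset.univ, (0:ℝ) ≤ ∑ j, ((hM.sqrt * hB.sqrt) j i)^2 := by
      intro i _; positivity
    have h2 := (Finset.sum_eq_zero_iff_of_nonneg h1).mp h i (Finset.mem_univ i)
    have h3 : ∀ j ∈ Finset.univ, (0:ℝ) ≤ ((hM.sqrt * hB.sqrt) j i)^2 := by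
      intro j _; positivity
    have := (Finset.sum_eq_zero_iff_of_nonneg h3).mp h2 j (Finset.mem_univ j)
    simpa [pow_eq_zero_iff] using this
  calc M * B = hM.sqrt * (hM.sqrt * hB.sqrt) * hB.sqrt := by
        rw [show hM.sqrt * (hM.sqrt * hB.sqrt) * hB.sqrt
          = hM.sqrt * hM.sqrt * (hB.sqrt * hB.sqrt) from by
            rw [Matrix.mul_assoc, Matrix.mul_assoc, Matrix.mul_assoc],
          hM.sqrt_mul_self, hB.sqrt_mul_self]
    _ = 0 := by rw [hX, Matrix.mul_zero, Matrix.zero_mul]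

private lemma gramMat_posSemidef' {d : ℕ} (p : V → Fin d → ℝ) :
    (gramMat p).PosSemidef := by
  have : gramMat p = (Matrix.of fun (k : Fin d) (i : V) => p i k)ᴴ *
      (Matrix.of fun (k : Fin d) (i : V) => p i k) := by
    ext i j
    simp [gramMat, Matrix.mul_apply, dotProduct]
  rw [this]
  exact Matrix.posSemidef_conjTranspose_mul_self _

private lemma dual_sum_split' [DecidableEq V] (G : SimpleGraph V)
    [DecidableRel G.Adj] {B : Matrix V V ℝ} (hB : IsDualSol G B) :
    (∑ i, ∑ j, B i j) = (∑ i, ∑ j, (if G.Adj i j then B i j else 0)) + 1 := by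
  have hpt : ∀ i j, B i j =
      (if G.Adj i j then B i j else 0) + (if i = j then B i j else 0) := by
    intro i j
    by_cases hadj : G.Adj i j
    · simp [hadj, G.ne_of_adj hadj]
    · by_cases hij : i = j
      · simp [hadj, hij]
      · simp [hadj, hij, hB.2.1 i j hij hadj]
  calc ∑ i, ∑ j, B i j
      = ∑ i, ∑ j, ((if G.Adj i j then B i j else 0) + (if i = j then B i j else 0)) := by
        exact Finset.sum_congr rfl fun i _ => Finset.sum_congr rfl fun j _ => hpt i j
    _ = (∑ i, ∑ j, (if G.Adj i j then B i j else 0))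
        + ∑ i, ∑ j, (if i = j then B i j else 0) := by
        rw [← Finset.sum_add_distrib]
        exact Finset.sum_congr rfl fun i _ => Finset.sum_add_distrib
    _ = _ := by
        congr 1
        have h1 : ∀ i, ∑ j, (if i = j then B i j else 0) = B i i := by
          intro i; simp
        simp_rw [h1]
        simpa [Matrix.trace, Matrix.diag] using hB.2.2.2

private lemma key_trace' [DecidableEq V] (G : SimpleGraph V) [DecidableRel G.Adj]
    (t : ℝ) (M B : Matrix V V ℝ) {d : ℕ} {p : V → Fin d → ℝ}
    (hp : IsVecColoring G t p) (hMp : M = gramMat p) (hB : IsDualSol G B) :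
    (M * B).trace = (t - ∑ i, ∑ j, B i j)
      + ∑ i, ∑ j, (if G.Adj i j then (M i j + 1) * B i j else 0) := by
  have hsym : ∀ i j, B j i = B i j := by
    intro i j
    have := congrFun (congrFun hB.1.1 i) j
    simpa [Matrix.conjTranspose_apply] using this
  have hdiag : ∀ i, M i i = t - 1 := by
    intro i; rw [hMp]; exact hp.1 i
  have htr : (M * B).trace = ∑ i, ∑ j, M i j * B j i := by
    simp [Matrix.trace, Matrix.diag, Matrix.mul_apply]
  have hterm : ∀ i j, M i j * B j i =
      ((if i = j then (t-1) * B i i else 0) - (if G.Adj i j then B i j else 0))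
      + (if G.Adj i j then (M i j + 1) * B i j else 0) := by
    intro i j
    by_cases hij : i = j
    · subst hij
      simp [G.irrefl, hdiag i]
    · by_cases hadj : G.Adj i j
      · rw [hsym i j]; simp only [hij, hadj, if_true, if_false]; ring
      · simp [hij, hadj, hB.2.1 i j hij hadj, hsym i j]
  have hsplit : (M * B).trace =
      ((∑ i, ∑ j, (if i = j then (t-1) * B i i else 0))
        - ∑ i, ∑ j, (if G.Adj i j then B i j else 0))
      + ∑ i, ∑ j, (if G.Adj i j then (M i j + 1) * B i j else 0) := by
    rw [htr]
    rw [show ((∑ i, ∑ j, (if i = j then (t-1) * B i i else 0))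
        - ∑ i, ∑ j, (if G.Adj i j then B i j else 0))
      + ∑ i, ∑ j, (if G.Adj i j then (M i j + 1) * B i j else 0)
      = ∑ i, (((∑ j, (if i = j then (t-1) * B i i else 0))
          - ∑ j, (if G.Adj i j then B i j else 0))
        + ∑ j, (if G.Adj i j then (M i j + 1) * B i j else 0)) from by
        rw [Finset.sum_add_distrib, Finset.sum_sub_distrib]]
    refine Finset.sum_congr rfl fun i _ => ?_
    rw [show ((∑ j, (if i = j then (t-1) * B i i else 0))
        - ∑ j, (if G.Adj i j then B i j else 0))
      + ∑ j, (if G.Adj i j then (M i j + 1) * B i j else 0)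
      = ∑ j, (((if i = j then (t-1) * B i i else 0) - (if G.Adj i j then B i j else 0))
        + (if G.Adj i j then (M i j + 1) * B i j else 0)) from by
        rw [Finset.sum_add_distrib, Finset.sum_sub_distrib]]
    exact Finset.sum_congr rfl fun j _ => hterm i j
  have hd : (∑ i, ∑ j, (if i = j then (t-1) * B i i else 0)) = t - 1 := by
    have h1 : ∀ i, ∑ j, (if i = j then (t-1) * B i i else 0) = (t-1) * B i i := by
      intro i; simp
    simp_rw [h1, ← Finset.mul_sum]
    have : ∑ i, B i i = 1 := by simpa [Matrix.trace, Matrix.diag] using hB.2.2.2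
    rw [this, mul_one]
  have hs := dual_sum_split' G hB
  rw [hsplit, hd]
  have : (∑ i, ∑ j, (if G.Adj i j then B i j else 0)) = (∑ i, ∑ j, B i j) - 1 := by
    linarith
  rw [this]; ring

private lemma adj_sum_nonpos' [DecidableEq V] (G : SimpleGraph V) [DecidableRel G.Adj]
    (t : ℝ) (M B : Matrix V V ℝ) {d : ℕ} {p : V → Fin d → ℝ}
    (hp : IsVecColoring G t p) (hMp : M = gramMat p) (hB : IsDualSol G B) :
    ∀ i ∈ Finset.univ, ∀ j ∈ (Finset.univ : Finset V),
      (if G.Adj i j then (M i j + 1) * B i j else 0) ≤ 0 := by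
  intro i _ j _
  by_cases hadj : G.Adj i j
  · simp only [hadj, if_true]
    have h1 : M i j ≤ -1 := by rw [hMp]; exact hp.2 i j hadj
    exact mul_nonpos_of_nonpos_of_nonneg (by linarith) (hB.2.2.1 i j)
  · simp [hadj]

private lemma weak_dual' [DecidableEq V] (G : SimpleGraph V) [DecidableRel G.Adj]
    (t : ℝ) {B : Matrix V V ℝ} {d : ℕ} {p : V → Fin d → ℝ}
    (hp : IsVecColoring G t p) (hB : IsDualSol G B) :
    (∑ i, ∑ j, B i j) ≤ t := by
  have hkey := key_trace' G t (gramMat p) B hp rfl hB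
  have htr := psd_trace_nonneg' (gramMat_posSemidef' p) hB.1
  have hS : (∑ i, ∑ j, (if G.Adj i j then (gramMat p i j + 1) * B i j else 0)) ≤ 0 :=
    Finset.sum_nonpos fun i hi => Finset.sum_nonpos fun j hj =>
      adj_sum_nonpos' G t (gramMat p) B hp rfl hB i hi j hj
  linarith

end AuxSlack

/-- Complementary slackness: if `M` is the Gram matrix of a vector
`t`-coloring of `G` and `B` is a feasible dual solution with objective value
`s = sum B`, then `tr(MB) = (t - s) + ∑_{i ∼ j} (M i j + 1) * B i j`; consequently
`M` and `B` are both optimal iff `MB = 0` and `B i j = 0` whenever `M i j < -1`. -/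
theorem complementary_slackness {V : Type*} [Fintype V] [DecidableEq V]
    (G : SimpleGraph V) [DecidableRel G.Adj] (t : ℝ) (M B : Matrix V V ℝ)
    (hM : ∃ (d : ℕ) (p : V → Fin d → ℝ), IsVecColoring G t p ∧ M = gramMat p)
    (hB : IsDualSol G B) :
    ((M * B).trace =
        (t - ∑ i, ∑ j, B i j) + ∑ i, ∑ j, (if G.Adj i j then (M i j + 1) * B i j else 0)) ∧
      ((t = vecChrom G ∧ (∑ i, ∑ j, B i j) = vecChrom G) ↔
        (M * B = 0 ∧ ∀ i j, M i j < -1 → B i j = 0)) := by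
  obtain ⟨d, p, hp, hMp⟩ := hM
  have hkey := key_trace' G t M B hp hMp hB
  have hpsdM : M.PosSemidef := hMp ▸ gramMat_posSemidef' p
  have hSle : (∑ i, ∑ j, (if G.Adj i j then (M i j + 1) * B i j else 0)) ≤ 0 :=
    Finset.sum_nonpos fun i hi => Finset.sum_nonpos fun j hj =>
      adj_sum_nonpos' G t M B hp hMp hB i hi j hj
  have hs1 : 1 ≤ ∑ i, ∑ j, B i j := by
    have hsplit := dual_sum_split' G hB
    have : 0 ≤ ∑ i, ∑ j, (if G.Adj i j then B i j else 0) :=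
      Finset.sum_nonneg fun i _ => Finset.sum_nonneg fun j _ => by
        by_cases hadj : G.Adj i j <;> simp [hadj, hB.2.2.1 i j]
    linarith
  refine ⟨hkey, ?_, ?_⟩
  · rintro ⟨ht, hs⟩
    have hts : t - (∑ i, ∑ j, B i j) = 0 := by rw [ht, hs]; ring
    have htrge := psd_trace_nonneg' hpsdM hB.1
    have htr0 : (M * B).trace = 0 := by linarith
    have hS0 : (∑ i, ∑ j, (if G.Adj i j then (M i j + 1) * B i j else 0)) = 0 := by
      linarith
    have hterm0 : ∀ i j, (if G.Adj i j then (M i j + 1) * B i j else 0) = 0 := by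
      intro i j
      have h1 := (Finset.sum_eq_zero_iff_of_nonpos (fun i hi =>
        Finset.sum_nonpos fun j hj => adj_sum_nonpos' G t M B hp hMp hB i hi j hj)).mp
        hS0 i (Finset.mem_univ i)
      exact (Finset.sum_eq_zero_iff_of_nonpos (fun j hj =>
        adj_sum_nonpos' G t M B hp hMp hB i (Finset.mem_univ i) j hj)).mp
        h1 j (Finset.mem_univ j)
    refine ⟨psd_mul_eq_zero' hpsdM hB.1 htr0, ?_⟩
    intro i j hMij
    by_cases hij : i = j
    · exfalso
      subst hij
      have h0 : (0:ℝ) ≤ M i i := by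
        rw [hMp]
        show (0:ℝ) ≤ p i ⬝ᵥ p i
        exact Finset.sum_nonneg fun k _ => mul_self_nonneg (p i k)
      linarith
    · by_cases hadj : G.Adj i j
      · have h1 := hterm0 i j
        rw [if_pos hadj] at h1
        rcases mul_eq_zero.mp h1 with h2 | h2
        · exfalso; linarith
        · exact h2
      · exact hB.2.1 i j hij hadj
  · rintro ⟨hMB, hslack⟩
    have htr0 : (M * B).trace = 0 := by rw [hMB]; simp
    have hS0 : (∑ i, ∑ j, (if G.Adj i j then (M i j + 1) * B i j else 0)) = 0 := by
      refine Finset.sum_eq_zero fun i _ => Finset.sum_eq_zero fun j _ => ?_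
      by_cases hadj : G.Adj i j
      · rw [if_pos hadj]
        have h1 : M i j ≤ -1 := by rw [hMp]; exact hp.2 i j hadj
        rcases lt_or_eq_of_le h1 with h2 | h2
        · rw [hslack i j h2, mul_zero]
        · rw [h2]; ring
      · rw [if_neg hadj]
    have hts : t = ∑ i, ∑ j, B i j := by
      rw [hS0, add_zero] at hkey
      rw [htr0] at hkey
      linarith
    have hmem : t ∈ {t : ℝ | 1 ≤ t ∧ ∃ (d : ℕ) (p : V → Fin d → ℝ),
        IsVecColoring G t p} := ⟨by linarith, d, p, hp⟩
    have hle : vecChrom G ≤ t := csInf_le ⟨1, fun x hx => hx.1⟩ hmem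
    have hge : (∑ i, ∑ j, B i j) ≤ vecChrom G := by
      refine le_csInf ⟨t, hmem⟩ fun t' ht' => ?_
      obtain ⟨_, d', p', hp'⟩ := ht'
      exact weak_dual' G t' hp' hB
    constructor <;> linarith
end

section
/- Let G be a finite simple graph with at least one edge. Then a vertex i of G is neighborly if and only if i is not an isolated vertex of the skeleton G^sk. -/
open Matrix Kronecker

section Aux

open Matrix Finset

variable {V : Type*} [Fintype V]

lemma VC.dot_self_nonneg {d : ℕ} (u : Fin d → ℝ) : 0 ≤ u ⬝ᵥ u :=
  Finset.sum_nonneg fun k _ => mul_self_nonneg _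

lemma VC.dot_sq_le {d : ℕ} (u v : Fin d → ℝ) : (u ⬝ᵥ v)^2 ≤ (u ⬝ᵥ u) * (v ⬝ᵥ v) := by
  have := Finset.sum_mul_sq_le_sq_mul_sq Finset.univ u v
  simpa [dotProduct, sq] using this

lemma VC.two_le {G : SimpleGraph V} {t : ℝ} {d : ℕ} {p : V → Fin d → ℝ}
    (h : IsVecColoring G t p) (hedge : ∃ a b, G.Adj a b) : 2 ≤ t := by
  obtain ⟨a, b, hab⟩ := hedge
  have h1 := h.2 a b hab
  have h2 := VC.dot_sq_le (p a) (p b)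
  rw [h.1 a, h.1 b] at h2
  have h0 : 0 ≤ t - 1 := by rw [← h.1 a]; exact VC.dot_self_nonneg _
  nlinarith

lemma VC.smul_dot {d : ℕ} (c : ℝ) (u v : Fin d → ℝ) :
    (c • u) ⬝ᵥ (c • v) = (c*c) * (u ⬝ᵥ v) := by
  rw [smul_dotProduct, dotProduct_smul, smul_eq_mul, smul_eq_mul, mul_assoc]

lemma VC.scale {G : SimpleGraph V} {s t : ℝ} {d : ℕ} {p : V → Fin d → ℝ}
    (h : IsVecColoring G s p) (hedge : ∃ a b, G.Adj a b) (hst : s ≤ t) :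
    ∃ q : V → Fin d → ℝ, IsVecColoring G t q := by
  have hs2 : 2 ≤ s := VC.two_le h hedge
  have hs1 : 0 < s - 1 := by linarith
  have ht1 : 0 < t - 1 := by linarith
  set r := Real.sqrt ((t-1)/(s-1)) with hr
  have hr2 : r * r = (t-1)/(s-1) := Real.mul_self_sqrt (by positivity)
  have hr1 : 1 ≤ r * r := by rw [hr2, le_div_iff₀ hs1]; linarith
  refine ⟨fun v => r • p v, fun i => ?_, fun i j hij => ?_⟩
  · rw [VC.smul_dot, h.1 i, hr2]; field_simp
  · have he := h.2 i j hij
    rw [VC.smul_dot]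
    nlinarith

lemma VC.combine {G : SimpleGraph V} {t : ℝ} {d1 d2 : ℕ}
    {p : V → Fin d1 → ℝ} {q : V → Fin d2 → ℝ}
    (hp : IsVecColoring G t p) (hq : IsVecColoring G t q) :
    ∃ r : V → Fin (d1 + d2) → ℝ, IsVecColoring G t r ∧
      ∀ u v, r u ⬝ᵥ r v = (1/2) * (p u ⬝ᵥ p v) + (1/2) * (q u ⬝ᵥ q v) := by
  set c : ℝ := Real.sqrt (1/2) with hcdef
  have hc : c * c = 1/2 := Real.mul_self_sqrt (by norm_num)
  refine ⟨fun v => Fin.append (c • p v) (c • q v), ⟨fun i => ?_, fun i j hij => ?_⟩, fun u v => ?_⟩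
  all_goals
    have key : ∀ u v : V, (Fin.append (c • p u) (c • q u)) ⬝ᵥ (Fin.append (c • p v) (c • q v))
        = (1/2) * (p u ⬝ᵥ p v) + (1/2) * (q u ⬝ᵥ q v) := by
      intro u v
      have : (Fin.append (c • p u) (c • q u)) ⬝ᵥ (Fin.append (c • p v) (c • q v))
          = (c • p u) ⬝ᵥ (c • p v) + (c • q u) ⬝ᵥ (c • q v) := by
        simp [dotProduct, Fin.sum_univ_add, Fin.append_left, Fin.append_right]
      rw [this, VC.smul_dot, VC.smul_dot, hc]
  · rw [key i i, hp.1 i, hq.1 i]; ring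
  · have := hp.2 i j hij; have := hq.2 i j hij
    rw [key i j]; linarith
  · exact key u v

end Aux
section Aux2

open Matrix Finset

variable {V : Type*} [Fintype V]

lemma VC.simplex (G : SimpleGraph V) (hne : Nonempty V) :
    ∃ (p : V → Fin (Fintype.card V) → ℝ), IsVecColoring G (Fintype.card V) p := by
  classical
  have hn0 : 0 < Fintype.card V := Fintype.card_pos
  have hnR : (0:ℝ) < Fintype.card V := by exact_mod_cast hn0
  set n := Fintype.card V with hn
  set c : ℝ := Real.sqrt n with hcdef
  have hc : c * c = n := Real.mul_self_sqrt hnR.le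
  have hc0 : 0 < c := Real.sqrt_pos.2 hnR
  set e := Fintype.equivFin V with he
  set p : V → Fin n → ℝ := fun v k => (if k = e v then c else 0) - 1/c with hp
  have key : ∀ v w : V, p v ⬝ᵥ p w = (if v = w then (n:ℝ) else 0) - 1 := by
    intro v w
    have expand : ∀ k : Fin n, p v k * p w k =
        (if k = e v then (if k = e w then c*c else 0) else 0)
        - (if k = e v then c/c else 0) - (if k = e w then c/c else 0) + 1/(c*c) := by
      intro k
      have hAB : (if k = e v then c else 0) * (if k = e w then c else 0)
          = (if k = e v then (if k = e w then c*c else 0) else 0) := by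
        by_cases h1 : k = e v <;> by_cases h2 : k = e w <;> simp [h1, h2]
      have hA : (if k = e v then c else 0) * (1/c) = (if k = e v then c/c else 0) := by
        by_cases h1 : k = e v <;> simp [h1] <;> ring
      have hB : (1/c) * (if k = e w then c else 0) = (if k = e w then c/c else 0) := by
        by_cases h2 : k = e w <;> simp [h2] <;> ring
      have : p v k * p w k = (if k = e v then c else 0) * (if k = e w then c else 0)
          - (if k = e v then c else 0) * (1/c) - (1/c) * (if k = e w then c else 0)
          + (1/c) * (1/c) := by simp only [hp]; ring
      rw [this, hAB, hA, hB]
      congr 1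
      rw [div_mul_div_comm, one_mul]
    have hsum : p v ⬝ᵥ p w = ∑ k : Fin n, ((if k = e v then (if k = e w then c*c else 0) else 0)
        - (if k = e v then c/c else 0) - (if k = e w then c/c else 0) + 1/(c*c)) :=
      Finset.sum_congr rfl fun k _ => expand k
    rw [hsum]
    simp only [Finset.sum_add_distrib, Finset.sum_sub_distrib, Finset.sum_ite_eq',
      Finset.mem_univ, if_true, Finset.sum_const, Finset.card_univ, nsmul_eq_mul]
    have hcc : c / c = 1 := div_self hc0.ne'
    have hEv : (if e v = e w then c * c else 0) = (if v = w then (n:ℝ) else 0) := by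
      by_cases h : v = w
      · simp [h, hc]
      · have : e v ≠ e w := fun hh => h (e.injective hh)
        simp [h, this]
    rw [hEv, hcc, Fintype.card_fin, hc]
    have : (n:ℝ) * (1/(n:ℝ)) = 1 := by field_simp
    rw [this]
    ring
  refine ⟨p, fun i => ?_, fun i j hij => ?_⟩
  · rw [key i i]; simp
  · rw [key i j]; simp [hij.ne]

end Aux2
section Aux3

open Matrix Finset

variable {V : Type*} [Fintype V]

lemma VC.farkas {d : ℕ} (s : Finset V) (v : V → Fin d → ℝ) (x : Fin d → ℝ) :
    (∃ c : V → ℝ, (∀ l, 0 ≤ c l) ∧ (∀ l, c l ≠ 0 → l ∈ s) ∧ x = ∑ l, c l • v l) ∨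
    (∃ y : Fin d → ℝ, (∀ l ∈ s, y ⬝ᵥ v l ≤ 0) ∧ 0 < y ⬝ᵥ x) := by
  classical
  induction s using Finset.induction generalizing v x with
  | empty =>
      by_cases hx : x = 0
      · exact Or.inl ⟨0, fun l => le_refl 0, fun l hl => absurd rfl hl, by simp [hx]⟩
      · refine Or.inr ⟨x, by simp, ?_⟩
        rcases (VC.dot_self_nonneg x).lt_or_eq with h | h
        · exact h
        · exact absurd (dotProduct_self_eq_zero.mp h.symm) hx
  | @insert a s ha ih =>
      rcases ih v x with ⟨c, hc0, hcs, hcx⟩ | ⟨y, hy, hyx⟩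
      · exact Or.inl ⟨c, hc0, fun l hl => Finset.mem_insert_of_mem (hcs l hl), hcx⟩
      by_cases hya : y ⬝ᵥ v a ≤ 0
      · refine Or.inr ⟨y, fun l hl => ?_, hyx⟩
        rcases Finset.mem_insert.mp hl with rfl | hl
        · exact hya
        · exact hy l hl
      push_neg at hya
      set v' : V → Fin d → ℝ := fun l => v l - ((y ⬝ᵥ v l)/(y ⬝ᵥ v a)) • v a with hv'
      set x' : Fin d → ℝ := x - ((y ⬝ᵥ x)/(y ⬝ᵥ v a)) • v a with hx'
      rcases ih v' x' with ⟨c, hc0, hcs, hcx⟩ | ⟨z, hz, hzx⟩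
      · left
        set μ : ℝ := (y ⬝ᵥ x)/(y ⬝ᵥ v a) - ∑ l, c l * ((y ⬝ᵥ v l)/(y ⬝ᵥ v a)) with hμ
        have hμ0 : 0 ≤ μ := by
          have h1 : 0 < (y ⬝ᵥ x)/(y ⬝ᵥ v a) := div_pos hyx hya
          have h2 : ∑ l, c l * ((y ⬝ᵥ v l)/(y ⬝ᵥ v a)) ≤ 0 := by
            apply Finset.sum_nonpos
            intro l _
            by_cases hcl : c l = 0
            · simp [hcl]
            · have h3 : y ⬝ᵥ v l ≤ 0 := hy l (hcs l hcl)
              exact mul_nonpos_of_nonneg_of_nonpos (hc0 l)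
                (div_nonpos_of_nonpos_of_nonneg h3 hya.le)
          rw [hμ]; linarith
        have hTS : ∑ l, c l • v' l
            = (∑ l, c l • v l) - (∑ l, c l * ((y ⬝ᵥ v l)/(y ⬝ᵥ v a))) • v a := by
          simp only [hv', smul_sub, smul_smul, Finset.sum_sub_distrib, ← Finset.sum_smul]
        have h1 : x - ((y ⬝ᵥ x)/(y ⬝ᵥ v a)) • v a
            = (∑ l, c l • v l) - (∑ l, c l * ((y ⬝ᵥ v l)/(y ⬝ᵥ v a))) • v a := by
          rw [← hTS, ← hcx, hx']
        have h2 : x = (∑ l, c l • v l) + μ • v a := by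
          have h3 := sub_eq_iff_eq_add.mp h1
          rw [hμ, sub_smul]; conv_lhs => rw [h3]
          abel
        refine ⟨fun l => c l + (if l = a then μ else 0), fun l => ?_, fun l hl => ?_, ?_⟩
        · by_cases h : l = a
          · simp only [h, if_true]; exact add_nonneg (hc0 _) hμ0
          · simp only [h, if_false, add_zero]; exact hc0 l
        · by_cases h : l = a
          · exact h ▸ Finset.mem_insert_self a s
          · simp only [h, if_false, add_zero] at hl
            exact Finset.mem_insert_of_mem (hcs l hl)
        · have hsplit : ∑ l, (c l + (if l = a then μ else 0)) • v l
              = (∑ l, c l • v l) + μ • v a := by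
            simp only [add_smul, Finset.sum_add_distrib, ite_smul, zero_smul]
            rw [Finset.sum_ite_eq' Finset.univ a (fun l => μ • v l)]
            simp
          rw [hsplit, ← h2]
      · right
        set w : Fin d → ℝ := z - ((z ⬝ᵥ v a)/(y ⬝ᵥ v a)) • y with hw
        have hwa : w ⬝ᵥ v a = 0 := by
          rw [hw, sub_dotProduct, smul_dotProduct, smul_eq_mul,
            div_mul_eq_mul_div, mul_div_assoc, div_self hya.ne', mul_one, sub_self]
        refine ⟨w, fun l hl => ?_, ?_⟩
        · rcases Finset.mem_insert.mp hl with rfl | hl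
          · rw [hwa]
          · have hzl := hz l hl
            rw [hv'] at hzl
            simp only at hzl
            rw [dotProduct_sub, dotProduct_smul, smul_eq_mul] at hzl
            rw [hw, sub_dotProduct, smul_dotProduct, smul_eq_mul]
            calc z ⬝ᵥ v l - (z ⬝ᵥ v a)/(y ⬝ᵥ v a) * (y ⬝ᵥ v l)
                = z ⬝ᵥ v l - (y ⬝ᵥ v l)/(y ⬝ᵥ v a) * (z ⬝ᵥ v a) := by ring
              _ ≤ 0 := hzl
        · have hzx' := hzx
          rw [hx', dotProduct_sub, dotProduct_smul, smul_eq_mul] at hzx'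
          rw [hw, sub_dotProduct, smul_dotProduct, smul_eq_mul]
          calc (0:ℝ) < z ⬝ᵥ x - (y ⬝ᵥ x)/(y ⬝ᵥ v a) * (z ⬝ᵥ v a) := hzx'
            _ = z ⬝ᵥ x - (z ⬝ᵥ v a)/(y ⬝ᵥ v a) * (y ⬝ᵥ x) := by ring

end Aux3
section Aux4

open Matrix Finset Filter Topology

variable {V : Type*} [Fintype V]

lemma VC.gram_quad_nonneg {d : ℕ} (q : V → Fin d → ℝ) (x : V → ℝ) :
    0 ≤ ∑ a, ∑ b, x a * x b * (q a ⬝ᵥ q b) := by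
  have key : ∑ a, ∑ b, x a * x b * (q a ⬝ᵥ q b) = ∑ c : Fin d, (∑ a, x a * q a c)^2 := by
    calc ∑ a, ∑ b, x a * x b * (q a ⬝ᵥ q b)
        = ∑ a, ∑ b, ∑ c : Fin d, (x a * q a c) * (x b * q b c) := by
          refine Finset.sum_congr rfl fun a _ => Finset.sum_congr rfl fun b _ => ?_
          rw [dotProduct, Finset.mul_sum]
          exact Finset.sum_congr rfl fun c _ => by ring
      _ = ∑ a, ∑ c : Fin d, ∑ b, (x a * q a c) * (x b * q b c) :=
          Finset.sum_congr rfl fun a _ => Finset.sum_comm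
      _ = ∑ c : Fin d, ∑ a, ∑ b, (x a * q a c) * (x b * q b c) := Finset.sum_comm
      _ = ∑ c : Fin d, (∑ a, x a * q a c)^2 := by
          refine Finset.sum_congr rfl fun c _ => ?_
          rw [sq, Finset.sum_mul_sum]
  rw [key]
  exact Finset.sum_nonneg fun c _ => sq_nonneg _

lemma VC.exists_opt {G : SimpleGraph V} (hedge : ∃ a b, G.Adj a b) :
    ∃ (d : ℕ) (p : V → Fin d → ℝ), IsVecColoring G (vecChrom G) p := by
  classical
  obtain ⟨a0, b0, hab0⟩ := hedge
  have hne : Nonempty V := ⟨a0⟩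
  set S : Set ℝ := {t : ℝ | 1 ≤ t ∧ ∃ (d : ℕ) (p : V → Fin d → ℝ), IsVecColoring G t p}
    with hSdef
  have hvc : vecChrom G = sInf S := rfl
  have hmemn : (Fintype.card V : ℝ) ∈ S := by
    obtain ⟨p, hp⟩ := VC.simplex G hne
    refine ⟨?_, _, p, hp⟩
    have h1 : 1 ≤ Fintype.card V := Fintype.card_pos
    exact_mod_cast h1
  have hSne : S.Nonempty := ⟨_, hmemn⟩
  have h2le : ∀ t ∈ S, 2 ≤ t := fun t ht => by
    obtain ⟨_, d, p, hp⟩ := ht; exact VC.two_le hp ⟨a0, b0, hab0⟩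
  set t0 : ℝ := sInf S with ht0
  have h2t0 : 2 ≤ t0 := le_csInf hSne h2le
  have hcol : ∀ k : ℕ, ∃ (d : ℕ) (p : V → Fin d → ℝ),
      IsVecColoring G (t0 + 1/((k:ℝ)+1)) p := by
    intro k
    have hkpos : (0:ℝ) < 1/((k:ℝ)+1) := by positivity
    have hlt : sInf S < t0 + 1/((k:ℝ)+1) := by rw [← ht0]; linarith
    obtain ⟨s, hsS, hs⟩ := exists_lt_of_csInf_lt hSne hlt
    obtain ⟨_, d, p, hp⟩ := hsS
    obtain ⟨q, hq⟩ := VC.scale hp ⟨a0, b0, hab0⟩ hs.le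
    exact ⟨d, q, hq⟩
  choose dk pk hk using hcol
  set K : ℕ → (V → V → ℝ) := fun k a b => pk k a ⬝ᵥ pk k b with hKdef
  have hb : ∀ k a b, |K k a b| ≤ t0 := by
    intro k a b
    have h1 := VC.dot_sq_le (pk k a) (pk k b)
    rw [(hk k).1 a, (hk k).1 b] at h1
    have hkk : (1:ℝ)/((k:ℝ)+1) ≤ 1 := by
      rw [div_le_one (by positivity)]
      have : (0:ℝ) ≤ k := Nat.cast_nonneg k
      linarith
    have hkpos : (0:ℝ) < 1/((k:ℝ)+1) := by positivity
    set m : ℝ := t0 + 1/((k:ℝ)+1) - 1 with hm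
    have hm1 : 1 ≤ m := by rw [hm]; linarith
    have hmt : m ≤ t0 := by rw [hm]; linarith
    rw [abs_le]
    constructor
    · nlinarith [sq_nonneg (K k a b + m)]
    · nlinarith [sq_nonneg (K k a b - m)]
  have hSbb : Bornology.IsBounded {f : V → V → ℝ | ∀ a b, |f a b| ≤ t0} := by
    have hsub : {f : V → V → ℝ | ∀ a b, |f a b| ≤ t0} ⊆ Metric.closedBall 0 t0 := by
      intro f hf
      rw [Metric.mem_closedBall, dist_zero_right]
      rw [pi_norm_le_iff_of_nonneg (by linarith)]
      intro a
      rw [pi_norm_le_iff_of_nonneg (by linarith)]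
      intro b
      rw [Real.norm_eq_abs]; exact hf a b
    exact (Metric.isBounded_closedBall).subset hsub
  obtain ⟨Kinf, _, φ, hφ, hlim⟩ :=
    tendsto_subseq_of_bounded hSbb (x := K) (fun k a b => hb k a b)
  have hcomp : ∀ a b, Tendsto (fun k => K (φ k) a b) atTop (𝓝 (Kinf a b)) := by
    intro a b
    exact tendsto_pi_nhds.mp (tendsto_pi_nhds.mp hlim a) b
  have htk : Tendsto (fun k : ℕ => t0 + 1/((φ k : ℝ)+1)) atTop (𝓝 (t0 + 0)) :=
    Tendsto.add tendsto_const_nhds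
      ((tendsto_one_div_add_atTop_nhds_zero_nat).comp hφ.tendsto_atTop)
  rw [add_zero] at htk
  have hdiag : ∀ a, Kinf a a = t0 - 1 := by
    intro a
    have h1 : ∀ k, K (φ k) a a = t0 + 1/((φ k : ℝ)+1) - 1 := fun k => (hk (φ k)).1 a
    exact tendsto_nhds_unique (hcomp a a)
      ((htk.sub tendsto_const_nhds).congr fun k => (h1 k).symm)
  have hedgele : ∀ a b, G.Adj a b → Kinf a b ≤ -1 := fun a b hab =>
    le_of_tendsto (hcomp a b) (Filter.Eventually.of_forall fun k => (hk (φ k)).2 a b hab)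
  have hsymm : ∀ a b, Kinf a b = Kinf b a := by
    intro a b
    refine tendsto_nhds_unique (hcomp a b) ?_
    exact (hcomp b a).congr fun k => dotProduct_comm (pk (φ k) b) (pk (φ k) a)
  have hquad : ∀ x : V → ℝ, 0 ≤ ∑ a, ∑ b, x a * x b * Kinf a b := by
    intro x
    have hlim2 : Tendsto (fun k => ∑ a, ∑ b, x a * x b * K (φ k) a b) atTop
        (𝓝 (∑ a, ∑ b, x a * x b * Kinf a b)) := by
      refine tendsto_finset_sum _ fun a _ => tendsto_finset_sum _ fun b _ => ?_
      exact tendsto_const_nhds.mul (hcomp a b)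
    refine ge_of_tendsto hlim2 (Filter.Eventually.of_forall fun k => ?_)
    exact VC.gram_quad_nonneg (pk (φ k)) x
  set M : Matrix V V ℝ := Matrix.of Kinf with hM
  have hpsd : M.PosSemidef := by
    rw [Matrix.posSemidef_iff_dotProduct_mulVec]
    constructor
    · ext a b
      simp only [Matrix.conjTranspose_apply, hM, Matrix.of_apply, star_trivial]
      exact hsymm b a
    · intro x
      have heq : (star x) ⬝ᵥ (M *ᵥ x) = ∑ a, ∑ b, x a * x b * Kinf a b := by
        simp only [dotProduct, Matrix.mulVec, Pi.star_apply, star_trivial,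
          Finset.mul_sum]
        refine Finset.sum_congr rfl fun a _ => Finset.sum_congr rfl fun b _ => ?_
        simp only [hM, Matrix.of_apply]
        ring
      rw [heq]; exact hquad x
  obtain ⟨B, hB⟩ : ∃ B : Matrix V V ℝ, M = Bᴴ * B := by
    open scoped MatrixOrder Matrix.Norms.L2Operator in
    exact CStarAlgebra.nonneg_iff_eq_star_mul_self.mp hpsd.nonneg
  set e := Fintype.equivFin V with he
  have hdot : ∀ a b : V,
      (fun k => B (e.symm k) a) ⬝ᵥ (fun k => B (e.symm k) b) = Kinf a b := by
    intro a b
    have h1 : Kinf a b = ∑ c, B c a * B c b := by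
      have h2 := congrArg (fun (N : Matrix V V ℝ) => N a b) hB
      simp only [Matrix.mul_apply, Matrix.conjTranspose_apply, star_trivial, hM,
        Matrix.of_apply] at h2
      exact h2
    rw [dotProduct, h1]
    exact Equiv.sum_comp e.symm (fun c => B c a * B c b)
  refine ⟨Fintype.card V, fun a k => B (e.symm k) a, fun i => ?_, fun i j hij => ?_⟩
  · rw [hdot i i, hdiag i, hvc]
  · rw [hdot i j]; exact hedgele i j hij

end Aux4
section Aux5

open Matrix Finset

variable {V : Type*} [Fintype V]

lemma VC.slack_family {G : SimpleGraph V} (i : V)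
    (hex : ∃ (d : ℕ) (p : V → Fin d → ℝ), IsVecColoring G (vecChrom G) p)
    (S : Finset V)
    (hS : ∀ j ∈ S, G.Adj i j ∧ ∃ (d : ℕ) (p : V → Fin d → ℝ),
        IsVecColoring G (vecChrom G) p ∧ p i ⬝ᵥ p j < -1) :
    ∃ (d : ℕ) (r : V → Fin d → ℝ), IsVecColoring G (vecChrom G) r ∧
      ∀ j ∈ S, r i ⬝ᵥ r j < -1 := by
  classical
  revert hS
  induction S using Finset.induction with
  | empty =>
      intro _
      obtain ⟨d, p, hp⟩ := hex
      exact ⟨d, p, hp, fun j hj => absurd hj (Finset.notMem_empty j)⟩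
  | @insert a S' ha ih =>
      intro hS
      obtain ⟨d, r, hr, hslack⟩ := ih (fun j hj => hS j (Finset.mem_insert_of_mem hj))
      obtain ⟨hadj, d2, pa, hpa, hpaslack⟩ := hS a (Finset.mem_insert_self a S')
      obtain ⟨r', hr', hdotr⟩ := VC.combine hr hpa
      refine ⟨_, r', hr', fun j hj => ?_⟩
      rcases Finset.mem_insert.mp hj with rfl | hj
      · rw [hdotr]
        have h1 := hr.2 i j hadj
        linarith
      · rw [hdotr]
        have h1 := hslack j hj
        have h2 := hpa.2 i j (hS j (Finset.mem_insert_of_mem hj)).1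
        linarith

lemma VC.not_neighborly_slack {G : SimpleGraph V} {d : ℕ} {p : V → Fin d → ℝ}
    (hp : IsVecColoring G (vecChrom G) p) (hedge : ∃ a b, G.Adj a b) {i : V}
    (hnb : ¬ NeighborlyIn G p i) :
    ∃ (d' : ℕ) (q : V → Fin d' → ℝ), IsVecColoring G (vecChrom G) q ∧
      ∀ l, G.Adj i l → q i ⬝ᵥ q l < -1 := by
  classical
  set t := vecChrom G with htdef
  have ht : 2 ≤ t := VC.two_le hp hedge
  clear_value t
  set s : Finset V := Finset.univ.filter (fun l => G.Adj i l ∧ p i ⬝ᵥ p l = -1) with hs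
  rcases VC.farkas s p (-p i) with ⟨c, hc0, hcs, hcx⟩ | ⟨y, hy, hyx⟩
  · exact absurd ⟨c, hc0, fun j hj => (Finset.mem_filter.mp (hcs j hj)).2, hcx⟩ hnb
  have hypi : y ⬝ᵥ p i < 0 := by
    rw [dotProduct_neg] at hyx; linarith
  have hyy : 0 < y ⬝ᵥ y := by
    rcases (VC.dot_self_nonneg y).lt_or_eq with h | h
    · exact h
    · exfalso
      have h0 : y = 0 := dotProduct_self_eq_zero.mp h.symm
      rw [h0] at hypi
      simp [zero_dotProduct] at hypi
  set sl : Finset V := Finset.univ.filter (fun l => G.Adj i l ∧ p i ⬝ᵥ p l < -1) with hsl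
  set ε1 : ℝ := (-(y ⬝ᵥ p i))/(y ⬝ᵥ y) with hε1
  set ε2 : ℝ := (t-1)/(4*(-(y ⬝ᵥ p i))) with hε2
  set ε3 : ℝ := if h : sl.Nonempty then
      sl.inf' h (fun l => (-1 - p i ⬝ᵥ p l)/(|y ⬝ᵥ p l| + 1)) else 1 with hε3
  have hε1pos : 0 < ε1 := div_pos (by linarith) hyy
  have hε2pos : 0 < ε2 := div_pos (by linarith) (by linarith)
  have hε3pos : 0 < ε3 := by
    rw [hε3]; split_ifs with h
    · refine (Finset.lt_inf'_iff h).mpr fun l hl => ?_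
      have hls := (Finset.mem_filter.mp hl).2.2
      have h1 : 0 < -1 - p i ⬝ᵥ p l := by linarith
      positivity
    · norm_num
  set ε : ℝ := min (min ε1 ε2) ε3 with hε
  have hεpos : 0 < ε := lt_min (lt_min hε1pos hε2pos) hε3pos
  have hεε1 : ε ≤ ε1 := le_trans (min_le_left _ _) (min_le_left _ _)
  have hεε2 : ε ≤ ε2 := le_trans (min_le_left _ _) (min_le_right _ _)
  have hεε3 : ε ≤ ε3 := min_le_right _ _
  clear_value ε
  set N : ℝ := (t-1) + 2*ε*(y ⬝ᵥ p i) + ε*ε*(y ⬝ᵥ y) with hN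
  have hNlt : N < t - 1 := by
    have h1 : ε*(y ⬝ᵥ y) ≤ -(y ⬝ᵥ p i) := (le_div_iff₀ hyy).mp (hε1 ▸ hεε1)
    nlinarith
  have hNpos : 0 < N := by
    have h1 : ε * (4*(-(y ⬝ᵥ p i))) ≤ t - 1 :=
      (le_div_iff₀ (by linarith : (0:ℝ) < 4*(-(y ⬝ᵥ p i)))).mp (hε2 ▸ hεε2)
    nlinarith [mul_nonneg (mul_nonneg hεpos.le hεpos.le) hyy.le]
  clear_value N
  set lam : ℝ := Real.sqrt ((t-1)/N) with hlam
  have hlam2 : lam * lam = (t-1)/N := Real.mul_self_sqrt (div_nonneg (by linarith) hNpos.le)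
  have hlam1 : 1 < lam := by
    have h1 : (1:ℝ) < (t-1)/N := (one_lt_div hNpos).mpr hNlt
    nlinarith [hlam2, Real.sqrt_nonneg ((t-1)/N), hlam ▸ Real.sqrt_nonneg ((t-1)/N)]
  clear_value lam
  have hcommy : p i ⬝ᵥ y = y ⬝ᵥ p i := dotProduct_comm _ _
  have hqii : (p i + ε • y) ⬝ᵥ (p i + ε • y) = N := by
    simp only [add_dotProduct, dotProduct_add, smul_dotProduct,
      dotProduct_smul, smul_eq_mul, hcommy]
    rw [hp.1 i, hN]; ring
  have hqil : ∀ l : V, (lam • (p i + ε • y)) ⬝ᵥ p l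
      = lam * (p i ⬝ᵥ p l + ε * (y ⬝ᵥ p l)) := by
    intro l
    simp only [smul_dotProduct, add_dotProduct, smul_eq_mul]
    try ring
  have hkey : ∀ l, G.Adj i l → lam * (p i ⬝ᵥ p l + ε * (y ⬝ᵥ p l)) < -1 := by
    intro l hl
    have hple := hp.2 i l hl
    rcases lt_or_eq_of_le hple with hlt | heq
    · have hlsl : l ∈ sl := Finset.mem_filter.mpr ⟨Finset.mem_univ l, hl, hlt⟩
      have hslne : sl.Nonempty := ⟨l, hlsl⟩
      have hfl : ε ≤ (-1 - p i ⬝ᵥ p l)/(|y ⬝ᵥ p l| + 1) := by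
        refine le_trans hεε3 ?_
        rw [hε3, dif_pos hslne]
        exact Finset.inf'_le _ hlsl
      have hA : (0:ℝ) ≤ |y ⬝ᵥ p l| := abs_nonneg _
      have h2 : ε * (|y ⬝ᵥ p l| + 1) ≤ -1 - p i ⬝ᵥ p l := (le_div_iff₀ (by linarith)).mp hfl
      have h3 : y ⬝ᵥ p l ≤ |y ⬝ᵥ p l| := le_abs_self _
      have hinner : p i ⬝ᵥ p l + ε * (y ⬝ᵥ p l) < -1 := by nlinarith
      have h5 : lam * (p i ⬝ᵥ p l + ε * (y ⬝ᵥ p l)) ≤ lam * (-1) :=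
        mul_le_mul_of_nonneg_left hinner.le (by linarith)
      linarith
    · have hls : l ∈ s := Finset.mem_filter.mpr ⟨Finset.mem_univ l, hl, heq⟩
      have hyl : y ⬝ᵥ p l ≤ 0 := hy l hls
      have h4 := mul_nonpos_of_nonneg_of_nonpos hεpos.le hyl
      have hinner : p i ⬝ᵥ p l + ε * (y ⬝ᵥ p l) ≤ -1 := by linarith
      have h5 : lam * (p i ⬝ᵥ p l + ε * (y ⬝ᵥ p l)) ≤ lam * (-1) :=
        mul_le_mul_of_nonneg_left hinner (by linarith)
      linarith
  set q : V → Fin d → ℝ := fun l => if l = i then lam • (p i + ε • y) else p l with hqdef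
  have hqi : q i = lam • (p i + ε • y) := by simp [hqdef]
  have hqne : ∀ l, l ≠ i → q l = p l := fun l hli => by simp [hqdef, hli]
  refine ⟨d, q, ⟨fun l => ?_, fun u v huv => ?_⟩, fun l hl => ?_⟩
  · by_cases h : l = i
    · rw [h, hqi, VC.smul_dot, hqii, hlam2]
      field_simp
    · rw [hqne l h]; exact hp.1 l
  · by_cases hu : u = i
    · by_cases hv : v = i
      · exact absurd (hu.trans hv.symm) huv.ne
      · rw [hu, hqi, hqne v hv, hqil v]
        exact (hkey v (hu ▸ huv)).le
    · by_cases hv : v = i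
      · rw [hv, hqne u hu, hqi, dotProduct_comm, hqil u]
        exact (hkey u (hv ▸ huv).symm).le
      · rw [hqne u hu, hqne v hv]; exact hp.2 u v huv
  · have hli : l ≠ i := (G.ne_of_adj hl).symm
    rw [hqi, hqne l hli, hqil l]
    exact hkey l hl

end Aux5

/-- In a graph with at least one edge, a vertex is neighborly iff it is
not isolated in the skeleton. -/
theorem neighborly_iff_not_isolated {V : Type*} [Fintype V] (G : SimpleGraph V)
    (hedge : ∃ a b, G.Adj a b) (i : V) :
    Neighborly G i ↔ ∃ j, (skeleton G).Adj i j := by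
  classical
  constructor
  · intro hnb
    have hex : ∃ (d : ℕ) (p : V → Fin d → ℝ), IsVecColoring G (vecChrom G) p :=
      VC.exists_opt hedge
    set S : Finset V :=
      Finset.univ.filter (fun j => G.Adj i j ∧ ¬ (skeleton G).Adj i j) with hSdef
    have hS : ∀ j ∈ S, G.Adj i j ∧ ∃ (d : ℕ) (p : V → Fin d → ℝ),
        IsVecColoring G (vecChrom G) p ∧ p i ⬝ᵥ p j < -1 := by
      intro j hj
      obtain ⟨hadj, hns⟩ := (Finset.mem_filter.mp hj).2
      refine ⟨hadj, ?_⟩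
      have hns' : ¬ (G.Adj i j ∧ ∀ (d : ℕ) (p : V → Fin d → ℝ),
          IsVecColoring G (vecChrom G) p → p i ⬝ᵥ p j = -1) := hns
      push_neg at hns'
      obtain ⟨d, p, hp, hne⟩ := hns' hadj
      exact ⟨d, p, hp, lt_of_le_of_ne (hp.2 i j hadj) hne⟩
    obtain ⟨d, r, hr, hslack⟩ := VC.slack_family i hex S hS
    obtain ⟨c, hc0, hcsupp, hcsum⟩ := hnb d r hr
    by_cases hall : ∀ j, c j = 0
    · exfalso
      have hzero : -r i = 0 := by
        rw [hcsum]
        exact Finset.sum_eq_zero fun j _ => by rw [hall j, zero_smul]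
      have hri : r i = 0 := neg_eq_zero.mp hzero
      have h0 : r i ⬝ᵥ r i = 0 := by rw [hri]; simp
      have ht := VC.two_le hr hedge
      rw [hr.1 i] at h0
      linarith
    · push_neg at hall
      obtain ⟨j, hj⟩ := hall
      obtain ⟨hadj, htight⟩ := hcsupp j hj
      have hjS : j ∉ S := fun hmem => absurd htight (ne_of_lt (hslack j hmem))
      have hnotand : ¬ (G.Adj i j ∧ ¬ (skeleton G).Adj i j) := fun h =>
        hjS (Finset.mem_filter.mpr ⟨Finset.mem_univ j, h⟩)
      exact ⟨j, not_not.mp (fun hns => hnotand ⟨hadj, hns⟩)⟩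
  · rintro ⟨j0, hskel⟩ d p hp
    by_contra hnb
    obtain ⟨d', q, hq, hall⟩ := VC.not_neighborly_slack hp hedge hnb
    have htight : q i ⬝ᵥ q j0 = -1 := hskel.2 d' q hq
    exact absurd htight (ne_of_lt (hall j0 hskel.1))
end
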